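/- arXiv:1612.05833 — 3 statements merged into one kernel-verified Lean document; each statement's English description precedes it below -/
import Mathlib

section
/- Suppose d ≥ 2, a : ℤ^d ↷ X is a free action, G_a is the associated graph, and F ⊆ X is a finite G_a-connected set with ∂_vis(∞) F = ∂F. Let H_{∂F} be the graph whose vertices are the unordered edges in ∂F, with two distinct edges adjacent iff some 3-cycle of G_a contains them both. Then H_{∂F} has an Euler cycle, i.e., a closed walk traversing every edge of H_{∂F} exactly once. -/
open Finset

open scoped Classical



namespace EulerAux

variable {V : Type*} [Fintype V] [DecidableEq V]

noncomputable instance (G : SimpleGraph V) : Fintype G.edgeSet := Fintype.ofFinite _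

/-- incident-edge count helper -/
noncomputable def inc (G : SimpleGraph V) (z : V) : Finset (Sym2 V) :=
  G.edgeFinset.filter (fun e => z ∈ e)

lemma countP_eq_card_inc {G : SimpleGraph V} (z : V) (l : List (Sym2 V)) (hnd : l.Nodup)
    (hl : ∀ e ∈ l, e ∈ G.edgeSet)
    (hsub : ∀ e, e ∈ G.edgeSet → z ∈ e → e ∈ l) :
    l.countP (fun e => z ∈ e) = (inc G z).card := by
  classical
  have h1 : inc G z = ⟨↑(l.filter (fun e => decide (z ∈ e))), by
      exact (List.Nodup.filter _ hnd)⟩ := by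
    ext e
    simp only [inc, Finset.mem_filter, SimpleGraph.mem_edgeFinset, Finset.mem_mk,
      Multiset.mem_coe, List.mem_filter, decide_eq_true_eq]
    constructor
    · rintro ⟨he, hz⟩; exact List.mem_filter.2 ⟨hsub e he hz, by simpa using hz⟩
    · intro h; obtain ⟨he, hz⟩ := List.mem_filter.1 h; exact ⟨hl e he, by simpa using hz⟩
  rw [h1]
  simp [Finset.card, List.countP_eq_length_filter]

lemma even_countP_closed {G : SimpleGraph V} {v : V} {c : G.Walk v v} (hc : c.IsTrail) (z : V) :
    Even (c.edges.countP (fun e => z ∈ e)) := by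
  classical
  have := hc.even_countP_edges_iff z
  simp only [ne_eq, not_true_eq_false, IsEmpty.forall_iff, iff_true] at this
  exact this

lemma trail_length_le {G : SimpleGraph V} {u v : V} {w : G.Walk u v} (h : w.IsTrail) :
    w.length ≤ Fintype.card (Sym2 V) := by
  have := h.edges_nodup.length_le_card
  simpa [SimpleGraph.Walk.length_edges] using this

/-- every vertex incident to an edge, in a graph with all even incidence counts,
has a nonempty closed trail based at it. -/
lemma exists_closed_trail (G : SimpleGraph V)
    (heven : ∀ z : V, Even (inc G z).card) (x : V)
    (hx : ∃ e ∈ G.edgeSet, x ∈ e) : ∃ c : G.Walk x x, c.IsTrail ∧ 0 < c.length := by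
  classical
  set B := Fintype.card (Sym2 V) with hB
  set P : ℕ → Prop := fun n => ∃ (u : V) (w : G.Walk x u), w.IsTrail ∧ w.length = n with hP
  have hP0 : P 0 := ⟨x, SimpleGraph.Walk.nil, by simp [SimpleGraph.Walk.isTrail_def], rfl⟩
  have hPN : P (Nat.findGreatest P B) := Nat.findGreatest_spec (Nat.zero_le B) hP0
  obtain ⟨u, w, hw, hlen⟩ := hPN
  -- maximality
  have hmax : ∀ m, P m → m ≤ Nat.findGreatest P B := by
    intro m hm
    obtain ⟨u', w', hw', hlen'⟩ := id hm
    exact Nat.le_findGreatest (hlen' ▸ trail_length_le hw') hm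
  -- all G-edges at u are among w.edges
  have hall : ∀ e, e ∈ G.edgeSet → u ∈ e → e ∈ w.edges := by
    intro e he hue
    by_contra hnot
    induction e with
    | h p q =>
      rcases (Sym2.mem_iff).1 hue with rfl | rfl
      · -- u = p
        have hadj : G.Adj u q := (SimpleGraph.mem_edgeSet (G := G)).1 he
        have hcat : (w.concat hadj).IsTrail := by
          rw [SimpleGraph.Walk.isTrail_def, SimpleGraph.Walk.edges_concat,
            List.concat_eq_append]
          refine List.Nodup.append hw.edges_nodup (List.nodup_singleton _) ?_
          intro a ha hb
          simp only [List.mem_singleton] at hb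
          subst hb
          exact hnot ha
        have := hmax (w.length + 1) ⟨q, w.concat hadj, hcat, by
          simp [SimpleGraph.Walk.length_concat]⟩
        omega
      · -- u = q
        have hadj : G.Adj u p := ((SimpleGraph.mem_edgeSet (G := G)).1 (by rwa [Sym2.eq_swap] at he))
        have hcat : (w.concat hadj).IsTrail := by
          rw [SimpleGraph.Walk.isTrail_def, SimpleGraph.Walk.edges_concat,
            List.concat_eq_append]
          refine List.Nodup.append hw.edges_nodup (List.nodup_singleton _) ?_
          intro a ha hb
          simp only [List.mem_singleton] at hb
          subst hb
          rw [Sym2.eq_swap] at ha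
          exact hnot ha
        have := hmax (w.length + 1) ⟨p, w.concat hadj, hcat, by
          simp [SimpleGraph.Walk.length_concat]⟩
        omega
  -- closedness
  have hux : u = x := by
    by_contra hne
    have hcount : w.edges.countP (fun e => u ∈ e) = (inc G u).card :=
      countP_eq_card_inc u w.edges hw.edges_nodup
        (fun e he => w.edges_subset_edgeSet he) hall
    have heq := (hw.even_countP_edges_iff u)
    rw [hcount] at heq
    have : Even (inc G u).card := heven u
    rw [heq] at this
    exact (this (fun h => (hne h.symm).elim)).2 rfl
  subst hux
  refine ⟨w, hw, ?_⟩
  -- length positive: there is an edge at x, and single-edge trails exist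
  obtain ⟨e, he, hxe⟩ := hx
  rcases Nat.eq_zero_or_pos w.length with h0 | hpos
  · exfalso
    have : e ∈ w.edges := hall e he hxe
    have : w.edges = [] := by
      have := SimpleGraph.Walk.length_edges w
      rw [h0] at this
      exact List.eq_nil_of_length_eq_zero this
    simp_all
  · exact hpos

end EulerAux

namespace EulerAux

variable {V : Type*} [Fintype V] [DecidableEq V]

lemma first_on_support {G : SimpleGraph V} {v : V} {c : G.Walk v v} :
    ∀ {a : V} (_ : G.Walk a v), a ∉ c.support →
      ∃ x w', G.Adj w' x ∧ x ∈ c.support ∧ w' ∉ c.support := by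
  intro a p
  induction p with
  | nil => intro ha; exact absurd c.start_mem_support ha
  | @cons a b v' h q ih =>
    intro ha
    by_cases hb : b ∈ c.support
    · exact ⟨b, a, h, hb, ha⟩
    · exact ih hb

theorem exists_eulerian (G : SimpleGraph V) (hne : Nonempty V) (hconn : G.Preconnected)
    (heven : ∀ z : V, Even (inc G z).card) :
    ∃ (v : V) (w : G.Walk v v), w.IsEulerian := by
  classical
  set B := Fintype.card (Sym2 V) with hB
  set P : ℕ → Prop := fun n => ∃ (v : V) (w : G.Walk v v), w.IsTrail ∧ w.length = n with hP
  obtain ⟨v₀⟩ := hne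
  have hP0 : P 0 := ⟨v₀, SimpleGraph.Walk.nil, by simp [SimpleGraph.Walk.isTrail_def], rfl⟩
  have hPN : P (Nat.findGreatest P B) := Nat.findGreatest_spec (Nat.zero_le B) hP0
  obtain ⟨v, c, hc, hlen⟩ := hPN
  have hmax : ∀ m, P m → m ≤ Nat.findGreatest P B := by
    intro m hm
    obtain ⟨u', w', hw', hlen'⟩ := id hm
    exact Nat.le_findGreatest (hlen' ▸ trail_length_le hw') hm
  refine ⟨v, c, ?_⟩
  rw [SimpleGraph.Walk.isEulerian_iff]
  refine ⟨hc, ?_⟩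
  by_contra hnot
  push_neg at hnot
  obtain ⟨e₀, he₀, he₀n⟩ := hnot
  -- the graph with the trail's edges removed
  set G' : SimpleGraph V := G.deleteEdges {e | e ∈ c.edges} with hG'
  have hle : G' ≤ G := SimpleGraph.deleteEdges_le _
  have hG'edge : ∀ e, e ∈ G'.edgeSet ↔ e ∈ G.edgeSet ∧ e ∉ c.edges := by
    intro e
    rw [hG', SimpleGraph.edgeSet_deleteEdges]
    simp
  -- even incidence counts in G'
  have heven' : ∀ z : V, Even (inc G' z).card := by
    intro z
    have hsplit : inc G z = inc G' z ∪ (hc.edgesFinset.filter (fun e => z ∈ e)) := by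
      ext e
      simp only [inc, Finset.mem_union, Finset.mem_filter, SimpleGraph.mem_edgeFinset,
        hG'edge, SimpleGraph.Walk.IsTrail.edgesFinset, Finset.mem_mk, Multiset.mem_coe]
      constructor
      · rintro ⟨he, hz⟩
        by_cases hec : e ∈ c.edges
        · exact Or.inr ⟨hec, hz⟩
        · exact Or.inl ⟨⟨he, hec⟩, hz⟩
      · rintro (⟨⟨he, _⟩, hz⟩ | ⟨hec, hz⟩)
        · exact ⟨he, hz⟩
        · exact ⟨c.edges_subset_edgeSet hec, hz⟩
    have hdisj : Disjoint (inc G' z) (hc.edgesFinset.filter (fun e => z ∈ e)) := by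
      rw [Finset.disjoint_left]
      intro e he1 he2
      simp only [inc, Finset.mem_filter, SimpleGraph.mem_edgeFinset, hG'edge] at he1
      simp only [Finset.mem_filter, SimpleGraph.Walk.IsTrail.edgesFinset, Finset.mem_mk,
        Multiset.mem_coe] at he2
      exact he1.1.2 he2.1
    have hcard : (inc G z).card = (inc G' z).card
        + (hc.edgesFinset.filter (fun e => z ∈ e)).card := by
      rw [hsplit, Finset.card_union_of_disjoint hdisj]
    have h2 : Even ((hc.edgesFinset.filter (fun e => z ∈ e)).card) := by
      have hcount := even_countP_closed hc z
      have heq2 : (hc.edgesFinset.filter (fun e => z ∈ e)).card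
          = c.edges.countP (fun e => z ∈ e) := by
        rw [List.countP_eq_length_filter]
        simp [SimpleGraph.Walk.IsTrail.edgesFinset, Finset.card, Finset.filter,
          Multiset.filter_coe]
      rwa [heq2]
    have h1 := heven z
    rw [hcard] at h1
    rcases Nat.even_add.mp h1 with h
    exact h.mpr h2
  -- find a vertex on the trail with a G'-edge
  have hxfind : ∃ x, x ∈ c.support ∧ ∃ e ∈ G'.edgeSet, x ∈ e := by
    induction e₀ with
    | h p q =>
      by_cases hp : p ∈ c.support
      · exact ⟨p, hp, s(p, q), (hG'edge _).2 ⟨he₀, he₀n⟩, by simp⟩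
      · obtain ⟨x, w', hadj, hxs, hw's⟩ :=
          first_on_support (c := c) ((hconn p v).some) hp
        refine ⟨x, hxs, s(w', x), (hG'edge _).2 ⟨hadj, ?_⟩, by simp⟩
        intro hmem
        exact hw's (c.fst_mem_support_of_mem_edges hmem)
  obtain ⟨x, hxs, hxe⟩ := hxfind
  obtain ⟨c₂, hc₂, hc₂pos⟩ := exists_closed_trail G' heven' x hxe
  -- transfer c₂ to G and splice
  have htrans : ∀ e ∈ c₂.edges, e ∈ G.edgeSet := fun e he =>
    ((hG'edge e).1 (c₂.edges_subset_edgeSet he)).1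
  set c₂' : G.Walk x x := c₂.transfer G htrans with hc₂'
  have hc₂'edges : c₂'.edges = c₂.edges := SimpleGraph.Walk.edges_transfer _ _
  set c₃ : G.Walk x x := (c.rotate x hxs).append c₂' with hc₃
  have hc₃trail : c₃.IsTrail := by
    rw [SimpleGraph.Walk.isTrail_def, hc₃, SimpleGraph.Walk.edges_append]
    refine List.Nodup.append ?_ ?_ ?_
    · exact ((c.rotate_edges x hxs).perm.nodup_iff).2 hc.edges_nodup
    · rw [hc₂'edges]; exact hc₂.edges_nodup
    · intro a ha hb
      rw [hc₂'edges] at hb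
      have ha' : a ∈ c.edges := ((c.rotate_edges x hxs).perm.mem_iff).1 ha
      exact ((hG'edge a).1 (c₂.edges_subset_edgeSet hb)).2 ha'
  have hlen3 : c₃.length = c.length + c₂.length := by
    rw [hc₃, SimpleGraph.Walk.length_append]
    congr 1
    · calc (c.rotate x hxs).length = (c.rotate x hxs).edges.length := by
            rw [SimpleGraph.Walk.length_edges]
        _ = c.edges.length := (c.rotate_edges x hxs).perm.length_eq
        _ = c.length := SimpleGraph.Walk.length_edges _
    · rw [hc₂']
      calc (c₂.transfer G htrans).length = (c₂.transfer G htrans).edges.length := by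
            rw [SimpleGraph.Walk.length_edges]
        _ = c₂.edges.length := by rw [hc₂'edges]
        _ = c₂.length := SimpleGraph.Walk.length_edges _
  have := hmax c₃.length ⟨x, c₃, hc₃trail, rfl⟩
  rw [hlen3, hlen] at this
  omega

end EulerAux



/-- `Γ₁ = {γ ∈ ℤᵈ : ‖γ‖_∞ = 1}`. -/
def Gamma1 (d : ℕ) : Finset (Fin d → ℤ) :=
  (Fintype.piFinset fun _ : Fin d => ({-1, 0, 1} : Finset ℤ)).erase 0

namespace ZdAux

variable {d : ℕ}

lemma mem_Gamma1_iff {γ : Fin d → ℤ} :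
    γ ∈ Gamma1 d ↔ γ ≠ 0 ∧ ∀ i, γ i = -1 ∨ γ i = 0 ∨ γ i = 1 := by
  simp only [Gamma1, Finset.mem_erase, Fintype.mem_piFinset, Finset.mem_insert,
    Finset.mem_singleton]

lemma neg_mem_Gamma1 {γ : Fin d → ℤ} (h : γ ∈ Gamma1 d) : -γ ∈ Gamma1 d := by
  rw [mem_Gamma1_iff] at h ⊢
  refine ⟨fun h0 => h.1 (by simpa using congrArg Neg.neg h0), fun i => ?_⟩
  rcases h.2 i with h' | h' | h' <;> simp [h']

/-- crossing count of a walk (given by start and list of steps) w.r.t. an edge predicate -/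
noncomputable def cc (b : (Fin d → ℤ) → (Fin d → ℤ) → Prop) :
    (Fin d → ℤ) → List (Fin d → ℤ) → ℕ
  | _, [] => 0
  | x, γ :: L => (if b x (x + γ) then 1 else 0) + cc b (x + γ) L

@[simp] lemma cc_nil (b) (x : Fin d → ℤ) : cc b x [] = 0 := rfl

@[simp] lemma cc_cons (b) (x γ : Fin d → ℤ) (L) :
    cc b x (γ :: L) = (if b x (x + γ) then 1 else 0) + cc b (x + γ) L := rfl

lemma cc_append (b) (x : Fin d → ℤ) (A B : List (Fin d → ℤ)) :
    cc b x (A ++ B) = cc b x A + cc b (x + A.sum) B := by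
  induction A generalizing x with
  | nil => simp
  | cons γ A ih =>
    simp only [List.cons_append, cc_cons, ih (x + γ), List.sum_cons, add_assoc]

/-- unit step -/
def IsUnit1 (s : Fin d → ℤ) : Prop := ∃ (i : Fin d) (ε : ℤ), (ε = 1 ∨ ε = -1) ∧ s = Pi.single i ε

lemma unit_mem_Gamma1 {s : Fin d → ℤ} (h : IsUnit1 s) : s ∈ Gamma1 d := by
  obtain ⟨i, ε, hε, rfl⟩ := h
  rw [mem_Gamma1_iff]
  constructor
  · intro h0
    have := congrFun h0 i
    rcases hε with rfl | rfl <;> simp at this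
  · intro j
    by_cases hij : j = i
    · subst hij; rcases hε with rfl | rfl <;> simp
    · right; left; exact Pi.single_eq_of_ne hij _

variable {b : (Fin d → ℤ) → (Fin d → ℤ) → Prop}

section Tri

variable (hsymm : ∀ u v, b u v ↔ b v u)
  (htri : ∀ (u γ δ : Fin d → ℤ), γ ∈ Gamma1 d → δ ∈ Gamma1 d → γ + δ ∈ Gamma1 d →
    Even ((if b u (u + γ) then 1 else 0) + (if b (u + γ) (u + γ + δ) then 1 else 0)
      + (if b u (u + (γ + δ)) then 1 else 0)))

include htri

/-- restriction of a vector to an index list -/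
def restr (γ : Fin d → ℤ) (is : List (Fin d)) : Fin d → ℤ :=
  fun j => if j ∈ is then γ j else 0

/-- the unit-step decomposition of a step, over an index list -/
def usteps (γ : Fin d → ℤ) (is : List (Fin d)) : List (Fin d → ℤ) :=
  is.filterMap fun i => if γ i = 0 then none else some (Pi.single i (γ i))

/-- splitting a `Γ₁` step into unit steps preserves crossing parity -/
lemma split_aux {γ : Fin d → ℤ} (hγ : ∀ i, γ i = -1 ∨ γ i = 0 ∨ γ i = 1) :
    ∀ (is : List (Fin d)), is.Nodup → ∀ x : Fin d → ℤ,
      ((usteps γ is).sum = restr γ is ∧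
      Even (cc b x (usteps γ is)
        + (if restr γ is = 0 then 0
           else if b x (x + restr γ is) then 1 else 0))) := by
  intro is
  induction is with
  | nil =>
    intro _ x
    refine ⟨by funext j; simp [restr, usteps], ?_⟩
    have h0 : restr γ [] = 0 := by funext j; simp [restr]
    simp [usteps, h0]
  | cons i is ih =>
    intro hnd x
    have hnd' : is.Nodup := (List.nodup_cons.1 hnd).2
    have hnmem : i ∉ is := (List.nodup_cons.1 hnd).1
    have hσeq : restr γ (i :: is) = Pi.single i (γ i) + restr γ is := by
      funext j
      by_cases hj : j = i
      · subst hj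
        simp [restr, hnmem]
      · simp only [restr, Pi.add_apply, Pi.single_eq_of_ne hj, zero_add, List.mem_cons]
        congr 1
        simp [hj]
    by_cases h0 : γ i = 0
    · -- step contributes nothing
      have hfm : usteps γ (i :: is) = usteps γ is := by
        simp [usteps, List.filterMap_cons, h0]
      have hσσ' : restr γ (i :: is) = restr γ is := by
        rw [hσeq, h0]
        simp
      obtain ⟨ihsum, iheven⟩ := ih hnd' x
      rw [hfm, hσσ']
      exact ⟨ihsum, iheven⟩
    · have hfm : usteps γ (i :: is) = Pi.single i (γ i) :: usteps γ is := by
        simp [usteps, List.filterMap_cons, h0]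
      set s : Fin d → ℤ := Pi.single i (γ i) with hs
      set σ : Fin d → ℤ := restr γ (i :: is) with hσ
      set σ' : Fin d → ℤ := restr γ is with hσ'
      obtain ⟨ihsum, iheven⟩ := ih hnd' (x + s)
      have hσ'i : σ' i = 0 := by simp [hσ', restr, hnmem]
      have hσi : σ i = γ i := by simp [hσ, restr]
      have hσne : σ ≠ 0 := fun hc => h0 (by simpa [hσi] using congrFun hc i)
      have hsum : (usteps γ (i :: is)).sum = σ := by
        rw [hfm, List.sum_cons, ihsum, hσeq]
      refine ⟨hsum, ?_⟩
      rw [hfm, cc_cons, if_neg hσne]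
      by_cases h0' : σ' = 0
      · rw [h0'] at iheven
        have iheven' : Even (cc b (x + s) (usteps γ is)) := by simpa using iheven
        have hσs : σ = s := by rw [hσeq, h0', add_zero]
        rw [hσs]
        rw [Nat.even_iff] at iheven' ⊢
        omega
      · rw [if_neg h0'] at iheven
        have hsΓ : s ∈ Gamma1 d := unit_mem_Gamma1 ⟨i, γ i, by
          rcases hγ i with h | h | h
          · right; exact h
          · exact absurd h h0
          · left; exact h, rfl⟩
        have hσ'Γ : σ' ∈ Gamma1 d := by
          rw [mem_Gamma1_iff]
          refine ⟨h0', fun j => ?_⟩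
          by_cases hj : j ∈ is
          · rw [hσ']; simp only [restr, if_pos hj]; exact hγ j
          · right; left; rw [hσ']; simp only [restr, if_neg hj]
        have hσΓ : σ ∈ Gamma1 d := by
          rw [mem_Gamma1_iff]
          refine ⟨hσne, fun j => ?_⟩
          by_cases hj : j ∈ (i :: is)
          · rw [hσ]; simp only [restr, if_pos hj]; exact hγ j
          · right; left; rw [hσ]; simp only [restr, if_neg hj]
        have ht := htri x s σ' hsΓ hσ'Γ (by rw [← hσeq]; exact hσΓ)
        rw [← hσeq] at ht
        have hrw : x + s + σ' = x + σ := by rw [hσeq]; ring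
        rw [hrw] at ht iheven
        rw [Nat.even_iff] at iheven ht ⊢
        omega

omit htri in
lemma single_neg' (i : Fin d) (ε : ℤ) :
    (Pi.single i (-ε) : Fin d → ℤ) = -(Pi.single i ε : Fin d → ℤ) := by
  funext j
  by_cases hj : j = i
  · subst hj; simp
  · simp [Pi.single_eq_of_ne hj]

lemma units1_spec {γ : Fin d → ℤ} (hΓ : γ ∈ Gamma1 d) (x : Fin d → ℤ) :
    (usteps γ (List.finRange d)).sum = γ ∧
    (∀ t ∈ usteps γ (List.finRange d), IsUnit1 t) ∧
    Even (cc b x (usteps γ (List.finRange d)) + (if b x (x + γ) then 1 else 0)) := by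
  obtain ⟨hne, hγ⟩ := mem_Gamma1_iff.1 hΓ
  have hres : restr γ (List.finRange d) = γ := by
    funext j; simp [restr, List.mem_finRange]
  obtain ⟨h1, h2⟩ := split_aux htri hγ (List.finRange d) (List.nodup_finRange d) x
  rw [hres] at h1 h2
  rw [if_neg hne] at h2
  refine ⟨h1, ?_, h2⟩
  intro t ht
  simp only [usteps, List.mem_filterMap] at ht
  obtain ⟨i, _, hi⟩ := ht
  by_cases h0 : γ i = 0
  · rw [if_pos h0] at hi; cases hi
  · rw [if_neg h0] at hi
    refine ⟨i, γ i, ?_, (Option.some_injective _ hi).symm⟩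
    rcases hγ i with h | h | h
    · right; exact h
    · exact absurd h h0
    · left; exact h

lemma expand_spec : ∀ (L : List (Fin d → ℤ)) (x : Fin d → ℤ), (∀ γ ∈ L, γ ∈ Gamma1 d) →
    ∃ E : List (Fin d → ℤ), E.sum = L.sum ∧ (∀ t ∈ E, IsUnit1 t) ∧
      Even (cc b x E + cc b x L) := by
  intro L
  induction L with
  | nil => intro x _; exact ⟨[], rfl, by simp, by simp⟩
  | cons γ L ih =>
    intro x hmem
    obtain ⟨E', hsum', hunit', heven'⟩ := ih (x + γ) (fun γ' h => hmem γ' (List.mem_cons_of_mem _ h))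
    have hΓ : γ ∈ Gamma1 d := hmem γ (List.mem_cons_self)
    obtain ⟨hu1, hu2, hu3⟩ := units1_spec htri hΓ x
    refine ⟨usteps γ (List.finRange d) ++ E', ?_, ?_, ?_⟩
    · rw [List.sum_append, hu1, hsum', List.sum_cons]
    · intro t ht
      rcases List.mem_append.1 ht with h | h
      · exact hu2 t h
      · exact hunit' t h
    · rw [cc_append, hu1, cc_cons]
      rw [Nat.even_iff] at hu3 heven' ⊢
      omega

include hsymm

lemma swap_even {s t : Fin d → ℤ} (hs : IsUnit1 s) (ht : IsUnit1 t) (hne : t ≠ -s)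
    (x : Fin d → ℤ) (R : List (Fin d → ℤ)) :
    Even (cc b x (s :: t :: R) + cc b x (t :: s :: R)) := by
  by_cases hst : s = t
  · subst hst
    exact ⟨cc b x (s :: s :: R), by ring⟩
  obtain ⟨i, ε, hε, rfl⟩ := hs
  obtain ⟨j, ε', hε', rfl⟩ := ht
  have hij : i ≠ j := by
    rintro rfl
    have hor : ε = ε' ∨ ε = -ε' := by
      rcases hε with rfl | rfl <;> rcases hε' with rfl | rfl <;> simp
    rcases hor with rfl | rfl
    · exact hst rfl
    · exact hne (by rw [single_neg', neg_neg])
  set s : Fin d → ℤ := Pi.single i ε with hsdef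
  set t : Fin d → ℤ := Pi.single j ε' with htdef
  have hsΓ : s ∈ Gamma1 d := unit_mem_Gamma1 ⟨i, ε, hε, rfl⟩
  have htΓ : t ∈ Gamma1 d := unit_mem_Gamma1 ⟨j, ε', hε', rfl⟩
  have hsi : s i = ε := by rw [hsdef]; simp
  have hti : t i = 0 := by rw [htdef]; apply Pi.single_eq_of_ne; exact hij
  have hsj : s j = 0 := by rw [hsdef]; apply Pi.single_eq_of_ne; exact Ne.symm hij
  have htj : t j = ε' := by rw [htdef]; simp
  have hstΓ : s + t ∈ Gamma1 d := by
    rw [mem_Gamma1_iff]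
    constructor
    · intro hc
      have hci := congrFun hc i
      simp only [Pi.add_apply, Pi.zero_apply, hsi, hti, add_zero] at hci
      rcases hε with rfl | rfl <;> simp at hci
    · intro k
      by_cases hk : k = i
      · subst hk
        simp only [Pi.add_apply, hsi, hti, add_zero]
        tauto
      · by_cases hk' : k = j
        · subst hk'
          simp only [Pi.add_apply, hsj, htj, zero_add]
          tauto
        · right; left
          have h1 : s k = 0 := by rw [hsdef]; apply Pi.single_eq_of_ne; exact hk
          have h2 : t k = 0 := by rw [htdef]; apply Pi.single_eq_of_ne; exact hk'
          simp [h1, h2]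
  have htsΓ : t + s ∈ Gamma1 d := by rwa [add_comm]
  have h1 := htri x s t hsΓ htΓ hstΓ
  have h2 := htri x t s htΓ hsΓ htsΓ
  have e1 : x + t + s = x + s + t := by ring
  have e2 : x + (t + s) = x + (s + t) := by ring
  rw [e1, e2] at h2
  simp only [cc_cons]
  rw [show x + t + s = x + s + t from by ring]
  rw [Nat.even_iff] at h1 h2 ⊢
  omega

lemma remove_pair {s : Fin d → ℤ} (hs : IsUnit1 s) :
    ∀ (T : List (Fin d → ℤ)) (x : Fin d → ℤ), (∀ t ∈ T, IsUnit1 t) → (-s) ∈ T →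
      ∃ T' : List (Fin d → ℤ), T'.length + 2 = (s :: T).length ∧ T'.sum = (s :: T).sum ∧
        (∀ t ∈ T', IsUnit1 t) ∧ Even (cc b x (s :: T) + cc b x T') := by
  intro T
  induction T with
  | nil => intro x _ h; cases h
  | cons t R ih =>
    intro x hunit hmem
    by_cases hts : t = -s
    · subst hts
      refine ⟨R, by simp, by simp only [List.sum_cons]; ring,
        fun u hu => hunit u (List.mem_cons_of_mem _ hu), ?_⟩
      have hxx : x + s + -s = x := by ring
      have hbb : (if b (x + s) x then 1 else 0)
          = (if b x (x + s) then 1 else 0) :=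
        if_congr (hsymm (x + s) x) rfl rfl
      simp only [cc_cons, hxx, hbb]
      rw [Nat.even_iff]
      omega
    · have hmem' : (-s) ∈ R := by
        rcases List.mem_cons.1 hmem with h | h
        · exact absurd h.symm hts
        · exact h
      have htu : IsUnit1 t := hunit t (List.mem_cons_self)
      have hsw := swap_even hsymm htri hs htu hts x R
      obtain ⟨R', hlen, hsum, hunit', hiff⟩ := ih (x + t)
        (fun u hu => hunit u (List.mem_cons_of_mem _ hu)) hmem'
      refine ⟨t :: R', by simp only [List.length_cons] at hlen ⊢; omega, ?_, ?_, ?_⟩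
      · simp only [List.sum_cons] at hsum ⊢
        rw [hsum]
        ring
      · intro u hu
        rcases List.mem_cons.1 hu with rfl | hu'
        · exact htu
        · exact hunit' u hu'
      · have hc1 : cc b x (t :: s :: R)
            = (if b x (x + t) then 1 else 0) + cc b (x + t) (s :: R) := by
          simp [cc_cons]
        have hc2 : cc b x (t :: R')
            = (if b x (x + t) then 1 else 0) + cc b (x + t) R' := by
          simp [cc_cons]
        rw [hc1] at hsw
        rw [hc2]
        rw [Nat.even_iff] at hsw hiff ⊢
        omega

omit hsymm htri in
lemma sum_eps (ε : ℤ) : ∀ (l : List ℤ), (∀ a ∈ l, a = 0 ∨ a = ε) → ∃ k : ℕ, l.sum = ε * k := by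
  intro l
  induction l with
  | nil => intro _; exact ⟨0, by simp⟩
  | cons a l ihl =>
    intro h
    obtain ⟨k, hk⟩ := ihl (fun a ha => h a (List.mem_cons_of_mem _ ha))
    rcases h a (List.mem_cons_self) with rfl | rfl
    · exact ⟨k, by simp [hk]⟩
    · exact ⟨k + 1, by rw [List.sum_cons, hk]; push_cast; ring⟩

omit hsymm htri in
lemma exists_neg_mem {s : Fin d → ℤ} (hs : IsUnit1 s) {T : List (Fin d → ℤ)}
    (hT : ∀ t ∈ T, IsUnit1 t) (hsum : (s :: T).sum = 0) : (-s) ∈ T := by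
  obtain ⟨i, ε, hε, rfl⟩ := hs
  by_contra hnot
  have hcoord : ∀ a ∈ T.map (fun v => v i), a = 0 ∨ a = ε := by
    intro a ha
    obtain ⟨t, ht, rfl⟩ := List.mem_map.1 ha
    obtain ⟨j, ε', hε', rfl⟩ := hT t ht
    by_cases hj : j = i
    · subst hj
      right
      rw [Pi.single_eq_same]
      have hne' : ε' ≠ -ε := by
        intro hc
        subst hc
        exact hnot (by rw [single_neg'] at ht; exact ht)
      rcases hε with rfl | rfl <;> rcases hε' with rfl | rfl <;> simp_all
    · left; exact Pi.single_eq_of_ne (Ne.symm hj) _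
  have happly : ∀ (L : List (Fin d → ℤ)), L.sum i = (L.map (fun v => v i)).sum := by
    intro L
    induction L with
    | nil => rfl
    | cons a L ihL => simp [ihL]
  have hsum_i : (Pi.single i ε :: T).sum i = 0 := by rw [hsum]; rfl
  rw [happly] at hsum_i
  simp only [List.map_cons, List.sum_cons, Pi.single_eq_same] at hsum_i
  obtain ⟨k, hk⟩ := sum_eps ε (T.map (fun v => v i)) hcoord
  rw [hk] at hsum_i
  have hε0 : ε ≠ 0 := by rcases hε with rfl | rfl <;> norm_num
  have : ε * (1 + k) = 0 := by push_cast; linarith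
  rcases mul_eq_zero.1 this with h | h
  · exact hε0 h
  · have hpos : (0:ℤ) < 1 + (k:ℤ) := by positivity
    exact absurd h hpos.ne'

include hsymm htri in
lemma unit_closed_even : ∀ (n : ℕ) (L : List (Fin d → ℤ)) (x : Fin d → ℤ),
    L.length ≤ n → (∀ t ∈ L, IsUnit1 t) → L.sum = 0 → Even (cc b x L) := by
  intro n
  induction n with
  | zero =>
    intro L x hlen _ _
    rw [List.length_eq_zero_iff.1 (Nat.le_zero.1 hlen)]
    simp
  | succ n ihn =>
    intro L x hlen hunit hsum
    match L with
    | [] => simp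
    | s :: T =>
      have hs : IsUnit1 s := hunit s (List.mem_cons_self)
      have hT : ∀ t ∈ T, IsUnit1 t := fun t ht => hunit t (List.mem_cons_of_mem _ ht)
      have hmem : (-s) ∈ T := exists_neg_mem hs hT hsum
      obtain ⟨T', hlen', hsum', hunit', heq⟩ := remove_pair hsymm htri hs T x hT hmem
      have hT' : Even (cc b x T') := by
        refine ihn T' x ?_ hunit' (by rw [hsum', hsum])
        simp only [List.length_cons] at hlen hlen'
        omega
      rw [Nat.even_iff] at heq hT' ⊢
      omega

include hsymm htri in
theorem closed_even (L : List (Fin d → ℤ)) (hL : ∀ γ ∈ L, γ ∈ Gamma1 d) (h0 : L.sum = 0)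
    (x : Fin d → ℤ) : Even (cc b x L) := by
  obtain ⟨E, hEsum, hEunit, hEeven⟩ := expand_spec htri L x hL
  have hE : Even (cc b x E) :=
    unit_closed_even hsymm htri E.length E x le_rfl hEunit (by rw [hEsum, h0])
  rw [Nat.even_iff] at hE hEeven ⊢
  omega

end Tri
end ZdAux

namespace ZdAux

variable {d : ℕ}

/-- outside-a-finite-set step relation -/
def rcStep (T : Set (Fin d → ℤ)) (u v : Fin d → ℤ) : Prop :=
  v - u ∈ Gamma1 d ∧ u ∉ T ∧ v ∉ T

lemma rcStep_symm (T : Set (Fin d → ℤ)) {u v : Fin d → ℤ} (h : rcStep T u v) : rcStep T v u :=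
  ⟨by have := neg_mem_Gamma1 h.1; rwa [neg_sub] at this, h.2.2, h.2.1⟩

variable {T : Set (Fin d → ℤ)} {R : ℕ}

lemma not_mem_of_big (hT : ∀ γ ∈ T, ∀ i, (γ i).natAbs ≤ R) {v : Fin d → ℤ} {i : Fin d}
    (h : R < (v i).natAbs) : v ∉ T :=
  fun hv => absurd (hT v hv i) (by omega)

lemma move_coord (hT : ∀ γ ∈ T, ∀ i, (γ i).natAbs ≤ R) (w : Fin d → ℤ) (j : Fin d)
    (hsafe : ∀ v : Fin d → ℤ, (∀ i, i ≠ j → v i = w i) → v ∉ T) (c : ℤ) :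
    Relation.ReflTransGen (rcStep T) w (Function.update w j c) := by
  have key : ∀ (n : ℕ) (c : ℤ), (c - w j).natAbs ≤ n →
      Relation.ReflTransGen (rcStep T) w (Function.update w j c) := by
    intro n
    induction n with
    | zero =>
      intro c hc
      have : c = w j := by omega
      rw [this, Function.update_eq_self]
    | succ n ih =>
      intro c hc
      by_cases hcw : c = w j
      · rw [hcw, Function.update_eq_self]
      · set σ : ℤ := if w j < c then 1 else -1 with hσ
        have h1 : ((c - σ) - w j).natAbs ≤ n := by
          rcases lt_or_gt_of_ne (fun h : c = w j => hcw h) with h | h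
          · rw [hσ, if_neg (by omega)]; omega
          · rw [hσ, if_pos (by omega)]; omega
        have hstep : rcStep T (Function.update w j (c - σ)) (Function.update w j c) := by
          refine ⟨?_, hsafe _ (fun i hi => Function.update_of_ne hi _ _),
            hsafe _ (fun i hi => Function.update_of_ne hi _ _)⟩
          have hdiff : Function.update w j c - Function.update w j (c - σ)
              = Pi.single j σ := by
            funext k
            by_cases hk : k = j
            · subst hk
              simp [Function.update_self]
            · simp [Function.update_of_ne hk, Pi.single_eq_of_ne hk]
          rw [hdiff]
          have hσpm : σ = 1 ∨ σ = -1 := by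
            rcases le_or_gt c (w j) with h | h
            · right; rw [hσ, if_neg (by omega)]
            · left; rw [hσ, if_pos h]
          exact unit_mem_Gamma1 ⟨j, σ, hσpm, rfl⟩
        exact (ih (c - σ) h1).tail hstep
  exact key (c - w j).natAbs c le_rfl

lemma conn_outside (hd : 2 ≤ d) (hT : ∀ γ ∈ T, ∀ i, (γ i).natAbs ≤ R)
    {z : Fin d → ℤ} {i₀ : Fin d} (hz : R < (z i₀).natAbs) :
    Relation.ReflTransGen (rcStep T) z (fun _ => (R : ℤ) + 1) := by
  -- phase 1 : set all coordinates except i₀ to R+1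
  have phase1 : ∀ js : List (Fin d), i₀ ∉ js →
      ∃ v : Fin d → ℤ, Relation.ReflTransGen (rcStep T) z v ∧ v i₀ = z i₀ ∧
        (∀ j ∈ js, v j = (R:ℤ) + 1) := by
    intro js
    induction js with
    | nil => exact fun _ => ⟨z, Relation.ReflTransGen.refl, rfl, by simp⟩
    | cons j js ih =>
      intro hmem
      obtain ⟨v, hv, hvi₀, hvjs⟩ := ih (fun h => hmem (List.mem_cons_of_mem _ h))
      have hji₀ : i₀ ≠ j := fun h => hmem (h ▸ List.mem_cons_self)
      have hsafe : ∀ v' : Fin d → ℤ, (∀ i, i ≠ j → v' i = v i) → v' ∉ T := by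
        intro v' hv'
        exact not_mem_of_big hT (i := i₀) (by rw [hv' i₀ hji₀, hvi₀]; exact hz)
      refine ⟨Function.update v j ((R:ℤ)+1), hv.trans (move_coord hT v j hsafe _), ?_, ?_⟩
      · rw [Function.update_of_ne hji₀]; exact hvi₀
      · intro k hk
        rcases List.mem_cons.1 hk with rfl | hk'
        · rw [Function.update_self]
        · by_cases hkj : k = j
          · subst hkj; rw [Function.update_self]
          · rw [Function.update_of_ne hkj]; exact hvjs k hk'
  obtain ⟨v, hv, hvi₀, hvjs⟩ := phase1 ((List.finRange d).filter (· ≠ i₀))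
    (by simp)
  have hvoff : ∀ j, j ≠ i₀ → v j = (R:ℤ) + 1 := by
    intro j hj
    exact hvjs j (by simp [List.mem_filter, hj, List.mem_finRange])
  -- phase 2 : set coordinate i₀ to R+1
  obtain ⟨j₀, hj₀⟩ : ∃ j₀ : Fin d, j₀ ≠ i₀ := by
    by_cases h0 : i₀ = ⟨0, by omega⟩
    · refine ⟨⟨1, by omega⟩, ?_⟩
      rw [h0]
      intro hc
      simpa using congrArg Fin.val hc
    · exact ⟨⟨0, by omega⟩, fun hc => h0 hc.symm⟩
  have hsafe2 : ∀ v' : Fin d → ℤ, (∀ i, i ≠ i₀ → v' i = v i) → v' ∉ T := by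
    intro v' hv'
    refine not_mem_of_big hT (i := j₀) ?_
    rw [hv' j₀ hj₀, hvoff j₀ hj₀]
    omega
  have hfinal : Function.update v i₀ ((R:ℤ)+1) = (fun _ => (R:ℤ) + 1) := by
    funext k
    by_cases hk : k = i₀
    · subst hk; rw [Function.update_self]
    · rw [Function.update_of_ne hk]; exact hvoff k hk
  exact hv.trans (hfinal ▸ move_coord hT v i₀ hsafe2 ((R:ℤ)+1))

lemma infinite_unbounded {S : Set (Fin d → ℤ)} (hS : S.Infinite) (R : ℕ) :
    ∃ z ∈ S, ∃ i, R < (z i).natAbs := by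
  by_contra hnot
  push_neg at hnot
  apply hS
  have : S ⊆ Set.pi Set.univ (fun _ : Fin d => Set.Icc (-(R:ℤ)) R) := by
    intro z hz i _
    have := hnot z hz i
    simp only [Set.mem_Icc]
    omega
  exact Set.Finite.subset (Set.Finite.pi (fun i => Set.finite_Icc _ _)) this

lemma finite_bound {S : Set (Fin d → ℤ)} (hS : S.Finite) :
    ∃ R : ℕ, ∀ γ ∈ S, ∀ i, (γ i).natAbs ≤ R := by
  refine ⟨hS.toFinset.sup (fun γ => Finset.univ.sup (fun i => (γ i).natAbs)), ?_⟩
  intro γ hγ i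
  have h1 : (γ i).natAbs ≤ Finset.univ.sup (fun i => (γ i).natAbs) :=
    Finset.le_sup (f := fun i => (γ i).natAbs) (Finset.mem_univ i)
  have h2 : Finset.univ.sup (fun i => (γ i).natAbs)
      ≤ hS.toFinset.sup (fun γ => Finset.univ.sup (fun i => (γ i).natAbs)) :=
    Finset.le_sup (f := fun γ => Finset.univ.sup (fun i => (γ i).natAbs))
      (hS.mem_toFinset.2 hγ)
  exact le_trans h1 h2

end ZdAux


/-- Adjacency in the graph `G_a` associated to an action `a : ℤᵈ ↷ X`. -/
def ActAdj {X : Type*} (d : ℕ) (a : (Fin d → ℤ) → X → X) (x y : X) : Prop :=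
  ∃ γ ∈ Gamma1 d, a γ x = y

/-- The edge boundary `∂F` of `F`, as a set of unordered edges of `G_a`. -/
def bdSym {X : Type*} (d : ℕ) (a : (Fin d → ℤ) → X → X) (F : Set X) : Set (Sym2 X) :=
  {e | ∃ x y : X, e = s(x, y) ∧ ActAdj d a x y ∧ x ∈ F ∧ y ∉ F}

/-- The (ordered-pair) edge boundary of `F`. -/
def edgeBd {X : Type*} (d : ℕ) (a : (Fin d → ℤ) → X → X) (F : Set X) : Set (X × X) :=
  {p | ActAdj d a p.1 p.2 ∧ (p.1 ∈ F ↔ p.2 ∉ F)}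

/-- A set `S` is `G_a`-connected. -/
def ConnWithin {X : Type*} (d : ℕ) (a : (Fin d → ℤ) → X → X) (S : Set X) : Prop :=
  ∀ x ∈ S, ∀ y ∈ S, Relation.ReflTransGen (fun u v => u ∈ S ∧ v ∈ S ∧ ActAdj d a u v) x y

/-- The connected component of `y` in `G_a − ∂S`. -/
def compOutside {X : Type*} (d : ℕ) (a : (Fin d → ℤ) → X → X) (S : Set X) (y : X) :
    Set X :=
  {w | Relation.ReflTransGen
        (fun u v => ActAdj d a u v ∧ (u, v) ∉ edgeBd d a S) y w}

/-- The graph `H_{∂F}`: vertices are the unordered edges in `∂F`, and two distinct such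
edges are adjacent iff some 3-cycle of `G_a` contains them both. -/
def HBoundary {X : Type*} (d : ℕ) (a : (Fin d → ℤ) → X → X) (F : Set X) :
    SimpleGraph {e : Sym2 X // e ∈ bdSym d a F} :=
  SimpleGraph.fromRel (fun e e' =>
    ∃ p q r : X, ActAdj d a p q ∧ ActAdj d a q r ∧ ActAdj d a r p ∧
      (e.val = s(p, q) ∨ e.val = s(q, r) ∨ e.val = s(r, p)) ∧
      (e'.val = s(p, q) ∨ e'.val = s(q, r) ∨ e'.val = s(r, p)))

namespace ZdAux

/-- converting a reflexive-transitive chain to a step list with zero crossing count -/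
lemma chain_list {d : ℕ} (b : (Fin d → ℤ) → (Fin d → ℤ) → Prop)
    {rc : (Fin d → ℤ) → (Fin d → ℤ) → Prop}
    (hrc : ∀ u v, rc u v → v - u ∈ Gamma1 d ∧ ¬ b u v) {u w : Fin d → ℤ}
    (h : Relation.ReflTransGen rc u w) :
    ∃ L : List (Fin d → ℤ), (∀ γ ∈ L, γ ∈ Gamma1 d) ∧ u + L.sum = w ∧ cc b u L = 0 := by
  induction h with
  | refl => exact ⟨[], by simp, by simp, by simp⟩
  | tail h1 h2 ih =>
    rename_i m q
    obtain ⟨L, hL, hsum, hcc⟩ := ih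
    refine ⟨L ++ [q - m], ?_, ?_, ?_⟩
    · intro γ hγ
      rcases List.mem_append.1 hγ with h | h
      · exact hL γ h
      · rw [List.mem_singleton.1 h]
        exact (hrc m q h2).1
    · rw [List.sum_append, List.sum_singleton, ← add_assoc, hsum]
      ring
    · rw [cc_append, hcc, hsum]
      simp only [cc_cons, cc_nil, add_zero, zero_add]
      rw [if_neg]
      have : m + (q - m) = q := by ring
      rw [this]
      exact (hrc m q h2).2

end ZdAux

namespace XAux

open ZdAux

variable {X : Type*} {d : ℕ} (a : (Fin d → ℤ) → X → X) (F : Set X)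
variable (ha0 : ∀ x : X, a 0 x = x)
  (haadd : ∀ (g g' : Fin d → ℤ) (x : X), a (g + g') x = a g (a g' x))
  (hfree : ∀ (g : Fin d → ℤ) (x : X), a g x = x → g = 0)

include ha0 haadd hfree in
lemma act_inj {γ δ : Fin d → ℤ} {x : X} (h : a γ x = a δ x) : γ = δ := by
  have h1 : a (γ - δ) (a δ x) = a δ x := by
    rw [← haadd, sub_add_cancel, h]
  exact sub_eq_zero.1 (hfree _ _ h1)

include ha0 haadd in
lemma actAdj_symm {x y : X} (h : ActAdj d a x y) : ActAdj d a y x := by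
  obtain ⟨γ, hγ, hxy⟩ := h
  refine ⟨-γ, ZdAux.neg_mem_Gamma1 hγ, ?_⟩
  rw [← hxy, ← haadd, neg_add_cancel, ha0]

include ha0 haadd in
lemma mem_bdSym_iff {p q : X} :
    s(p, q) ∈ bdSym d a F ↔
      ActAdj d a p q ∧ ((p ∈ F ∧ q ∉ F) ∨ (q ∈ F ∧ p ∉ F)) := by
  constructor
  · rintro ⟨x, y, hexy, hadj, hxF, hyF⟩
    rcases Sym2.eq_iff.1 hexy with ⟨rfl, rfl⟩ | ⟨rfl, rfl⟩
    · exact ⟨hadj, Or.inl ⟨hxF, hyF⟩⟩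
    · exact ⟨actAdj_symm a ha0 haadd hadj, Or.inr ⟨hxF, hyF⟩⟩
  · rintro ⟨hadj, ⟨hp, hq⟩ | ⟨hq, hp⟩⟩
    · exact ⟨p, q, rfl, hadj, hp, hq⟩
    · exact ⟨q, p, Sym2.eq_swap, actAdj_symm a ha0 haadd hadj, hq, hp⟩

include ha0 haadd in
lemma not_bd_both_in {p q : X} (hp : p ∈ F) (hq : q ∈ F) : s(p, q) ∉ bdSym d a F := by
  rw [mem_bdSym_iff a F ha0 haadd]
  rintro ⟨_, ⟨_, h⟩ | ⟨_, h⟩⟩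
  · exact h hq
  · exact h hp

include ha0 haadd in
lemma not_bd_both_out {p q : X} (hp : p ∉ F) (hq : q ∉ F) : s(p, q) ∉ bdSym d a F := by
  rw [mem_bdSym_iff a F ha0 haadd]
  rintro ⟨_, ⟨h, _⟩ | ⟨h, _⟩⟩
  · exact hp h
  · exact hq h

include haadd in
lemma lift_rtg {r : X → X → Prop} (hr : ∀ p q : X, r p q → ∃ γ ∈ Gamma1 d, a γ p = q)
    {p q : X} (h : Relation.ReflTransGen r p q) (x₀ : X) (u : Fin d → ℤ)
    (hu : a u x₀ = p) :
    ∃ w : Fin d → ℤ, a w x₀ = q ∧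
      Relation.ReflTransGen
        (fun s t => t - s ∈ Gamma1 d ∧ r (a s x₀) (a t x₀)) u w := by
  induction h with
  | refl => exact ⟨u, hu, Relation.ReflTransGen.refl⟩
  | tail h1 h2 ih =>
    rename_i m q'
    obtain ⟨w, hw, hchain⟩ := ih
    obtain ⟨γ, hγ, hγeq⟩ := hr m q' h2
    refine ⟨w + γ, ?_, ?_⟩
    · rw [show w + γ = γ + w from by ring, haadd, hw, hγeq]
    · refine hchain.tail ⟨by rw [add_sub_cancel_left]; exact hγ, ?_⟩
      rw [hw, show w + γ = γ + w from by ring, haadd, hw, hγeq]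
      exact h2

end XAux

namespace XAux

open ZdAux

variable {X : Type*} {d : ℕ} (a : (Fin d → ℤ) → X → X) (F : Set X)
variable (ha0 : ∀ x : X, a 0 x = x)
  (haadd : ∀ (g g' : Fin d → ℤ) (x : X), a (g + g') x = a g (a g' x))
  (hfree : ∀ (g : Fin d → ℤ) (x : X), a g x = x → g = 0)

include ha0 haadd hfree in
lemma tri_even (P : Set (Sym2 X)) (hPsub : P ⊆ bdSym d a F)
    (hPadj : ∀ (f g : Sym2 X) (hf : f ∈ bdSym d a F) (hg : g ∈ bdSym d a F),
      (HBoundary d a F).Adj ⟨f, hf⟩ ⟨g, hg⟩ → (f ∈ P ↔ g ∈ P))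
    (x : X) (u γ δ : Fin d → ℤ) (hγ : γ ∈ Gamma1 d) (hδ : δ ∈ Gamma1 d)
    (hγδ : γ + δ ∈ Gamma1 d) :
    Even ((if s(a u x, a (u + γ) x) ∈ P then 1 else 0)
      + (if s(a (u + γ) x, a (u + γ + δ) x) ∈ P then 1 else 0)
      + (if s(a u x, a (u + (γ + δ)) x) ∈ P then 1 else 0)) := by
  classical
  have hassoc : u + (γ + δ) = u + γ + δ := by rw [add_assoc]
  rw [hassoc]
  set p := a u x with hp
  set q := a (u + γ) x with hq
  set r := a (u + γ + δ) x with hr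
  -- triangle adjacencies
  have hpq : ActAdj d a p q := ⟨γ, hγ, by rw [hp, hq, ← haadd, add_comm]⟩
  have hqr : ActAdj d a q r := ⟨δ, hδ, by rw [hq, hr, ← haadd, add_comm]⟩
  have hrp : ActAdj d a r p := by
    refine ⟨-(γ + δ), neg_mem_Gamma1 hγδ, ?_⟩
    rw [hr, hp, ← haadd]
    congr 1
    abel
  -- distinctness
  have hne_pq : p ≠ q := by
    intro h
    have := act_inj a ha0 haadd hfree (h : a u x = a (u + γ) x)
    exact (mem_Gamma1_iff.1 hγ).1 (by rwa [left_eq_add] at this)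
  have hne_qr : q ≠ r := by
    intro h
    have := act_inj a ha0 haadd hfree (h : a (u + γ) x = a (u + γ + δ) x)
    exact (mem_Gamma1_iff.1 hδ).1 (by rwa [left_eq_add] at this)
  have hne_pr : p ≠ r := by
    intro h
    have h2 := act_inj a ha0 haadd hfree
      (show a u x = a (u + (γ + δ)) x by rw [hassoc]; exact h)
    exact (mem_Gamma1_iff.1 hγδ).1 (by rwa [left_eq_add] at h2)
  -- Sym2 distinctness
  have hne12 : s(p, q) ≠ s(q, r) := by
    intro h
    rcases Sym2.eq_iff.1 h with ⟨h1, _⟩ | ⟨h1, _⟩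
    · exact hne_pq h1
    · exact hne_pr h1
  have hne13 : s(p, q) ≠ s(p, r) := by
    intro h
    rcases Sym2.eq_iff.1 h with ⟨_, h2⟩ | ⟨h1, h2⟩
    · exact hne_qr h2
    · exact hne_pr h1
  have hne23 : s(q, r) ≠ s(p, r) := by
    intro h
    rcases Sym2.eq_iff.1 h with ⟨h1, _⟩ | ⟨h1, h2⟩
    · exact hne_pq h1.symm
    · exact hne_qr h1
  -- P-membership transfers along triangle edges
  have key : ∀ (f g : Sym2 X) (hf : f ∈ bdSym d a F) (hg : g ∈ bdSym d a F), f ≠ g →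
      (f = s(p, q) ∨ f = s(q, r) ∨ f = s(r, p)) →
      (g = s(p, q) ∨ g = s(q, r) ∨ g = s(r, p)) → (f ∈ P ↔ g ∈ P) := by
    intro f g hf hg hne hf3 hg3
    refine hPadj f g hf hg ?_
    simp only [HBoundary, SimpleGraph.fromRel_adj]
    refine ⟨fun hEq => hne (congrArg Subtype.val hEq),
      Or.inl ⟨p, q, r, hpq, hqr, hrp, hf3, hg3⟩⟩
  have hswap_pr : s(p, r) = s(r, p) := Sym2.eq_swap
  by_cases hpF : p ∈ F <;> by_cases hqF : q ∈ F <;> by_cases hrF : r ∈ F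
  · -- all in
    rw [if_neg (fun h => not_bd_both_in a F ha0 haadd hpF hqF (hPsub h)),
      if_neg (fun h => not_bd_both_in a F ha0 haadd hqF hrF (hPsub h)),
      if_neg (fun h => not_bd_both_in a F ha0 haadd hpF hrF (hPsub h))]
    simp
  · -- p q in, r out : crossing s(q,r) and s(p,r)
    have h2 : s(q, r) ∈ bdSym d a F :=
      (mem_bdSym_iff a F ha0 haadd).2 ⟨hqr, Or.inl ⟨hqF, hrF⟩⟩
    have h3 : s(p, r) ∈ bdSym d a F :=
      (mem_bdSym_iff a F ha0 haadd).2 ⟨actAdj_symm a ha0 haadd hrp, Or.inl ⟨hpF, hrF⟩⟩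
    have hiff := key _ _ h2 h3 hne23 (Or.inr (Or.inl rfl)) (Or.inr (Or.inr hswap_pr))
    rw [if_neg (fun h => not_bd_both_in a F ha0 haadd hpF hqF (hPsub h))]
    by_cases hm : s(q, r) ∈ P
    · rw [if_pos hm, if_pos (hiff.1 hm)]
      simp
    · rw [if_neg hm, if_neg (fun h => hm (hiff.2 h))]
      simp
  · -- p in, q out, r in : crossing s(p,q) and s(q,r)
    have h1 : s(p, q) ∈ bdSym d a F :=
      (mem_bdSym_iff a F ha0 haadd).2 ⟨hpq, Or.inl ⟨hpF, hqF⟩⟩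
    have h2 : s(q, r) ∈ bdSym d a F :=
      (mem_bdSym_iff a F ha0 haadd).2 ⟨hqr, Or.inr ⟨hrF, hqF⟩⟩
    have hiff := key _ _ h1 h2 hne12 (Or.inl rfl) (Or.inr (Or.inl rfl))
    rw [if_neg (fun h => not_bd_both_in a F ha0 haadd hpF hrF (hPsub h))]
    by_cases hm : s(p, q) ∈ P
    · rw [if_pos hm, if_pos (hiff.1 hm)]
      simp
    · rw [if_neg hm, if_neg (fun h => hm (hiff.2 h))]
      simp
  · -- p in, q out, r out : crossing s(p,q) and s(p,r)
    have h1 : s(p, q) ∈ bdSym d a F :=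
      (mem_bdSym_iff a F ha0 haadd).2 ⟨hpq, Or.inl ⟨hpF, hqF⟩⟩
    have h3 : s(p, r) ∈ bdSym d a F :=
      (mem_bdSym_iff a F ha0 haadd).2 ⟨actAdj_symm a ha0 haadd hrp, Or.inl ⟨hpF, hrF⟩⟩
    have hiff := key _ _ h1 h3 hne13 (Or.inl rfl) (Or.inr (Or.inr hswap_pr))
    rw [if_neg (fun h => not_bd_both_out a F ha0 haadd hqF hrF (hPsub h))]
    by_cases hm : s(p, q) ∈ P
    · rw [if_pos hm, if_pos (hiff.1 hm)]
      simp
    · rw [if_neg hm, if_neg (fun h => hm (hiff.2 h))]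
      simp
  · -- p out, q in, r in : crossing s(p,q) and s(p,r)
    have h1 : s(p, q) ∈ bdSym d a F :=
      (mem_bdSym_iff a F ha0 haadd).2 ⟨hpq, Or.inr ⟨hqF, hpF⟩⟩
    have h3 : s(p, r) ∈ bdSym d a F :=
      (mem_bdSym_iff a F ha0 haadd).2 ⟨actAdj_symm a ha0 haadd hrp, Or.inr ⟨hrF, hpF⟩⟩
    have hiff := key _ _ h1 h3 hne13 (Or.inl rfl) (Or.inr (Or.inr hswap_pr))
    rw [if_neg (fun h => not_bd_both_in a F ha0 haadd hqF hrF (hPsub h))]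
    by_cases hm : s(p, q) ∈ P
    · rw [if_pos hm, if_pos (hiff.1 hm)]
      simp
    · rw [if_neg hm, if_neg (fun h => hm (hiff.2 h))]
      simp
  · -- p out, q in, r out : crossing s(p,q) and s(q,r)
    have h1 : s(p, q) ∈ bdSym d a F :=
      (mem_bdSym_iff a F ha0 haadd).2 ⟨hpq, Or.inr ⟨hqF, hpF⟩⟩
    have h2 : s(q, r) ∈ bdSym d a F :=
      (mem_bdSym_iff a F ha0 haadd).2 ⟨hqr, Or.inl ⟨hqF, hrF⟩⟩
    have hiff := key _ _ h1 h2 hne12 (Or.inl rfl) (Or.inr (Or.inl rfl))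
    rw [if_neg (fun h => not_bd_both_out a F ha0 haadd hpF hrF (hPsub h))]
    by_cases hm : s(p, q) ∈ P
    · rw [if_pos hm, if_pos (hiff.1 hm)]
      simp
    · rw [if_neg hm, if_neg (fun h => hm (hiff.2 h))]
      simp
  · -- p out, q out, r in : crossing s(q,r) and s(p,r)
    have h2 : s(q, r) ∈ bdSym d a F :=
      (mem_bdSym_iff a F ha0 haadd).2 ⟨hqr, Or.inr ⟨hrF, hqF⟩⟩
    have h3 : s(p, r) ∈ bdSym d a F :=
      (mem_bdSym_iff a F ha0 haadd).2 ⟨actAdj_symm a ha0 haadd hrp, Or.inr ⟨hrF, hpF⟩⟩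
    have hiff := key _ _ h2 h3 hne23 (Or.inr (Or.inl rfl)) (Or.inr (Or.inr hswap_pr))
    rw [if_neg (fun h => not_bd_both_out a F ha0 haadd hpF hqF (hPsub h))]
    by_cases hm : s(q, r) ∈ P
    · rw [if_pos hm, if_pos (hiff.1 hm)]
      simp
    · rw [if_neg hm, if_neg (fun h => hm (hiff.2 h))]
      simp
  · -- all out
    rw [if_neg (fun h => not_bd_both_out a F ha0 haadd hpF hqF (hPsub h)),
      if_neg (fun h => not_bd_both_out a F ha0 haadd hqF hrF (hPsub h)),
      if_neg (fun h => not_bd_both_out a F ha0 haadd hpF hrF (hPsub h))]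
    simp

end XAux

namespace XAux

open ZdAux

variable {X : Type*} {d : ℕ} (a : (Fin d → ℤ) → X → X) (F : Set X)
variable (ha0 : ∀ x : X, a 0 x = x)
  (haadd : ∀ (g g' : Fin d → ℤ) (x : X), a (g + g') x = a g (a g' x))
  (hfree : ∀ (g : Fin d → ℤ) (x : X), a g x = x → g = 0)

lemma outside_invariant (x₀ : X) {u w : Fin d → ℤ}
    (h : Relation.ReflTransGen
      (fun s t => t - s ∈ Gamma1 d ∧
        (ActAdj d a (a s x₀) (a t x₀) ∧ ((a s x₀), (a t x₀)) ∉ edgeBd d a F)) u w)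
    (hu : a u x₀ ∉ F) :
    Relation.ReflTransGen (rcStep {γ : Fin d → ℤ | a γ x₀ ∈ F}) u w ∧ a w x₀ ∉ F := by
  induction h with
  | refl => exact ⟨Relation.ReflTransGen.refl, hu⟩
  | tail h1 h2 ih =>
    rename_i m q
    obtain ⟨hchain, hm⟩ := ih
    have hq : a q x₀ ∉ F := by
      intro hqF
      exact h2.2.2 ⟨h2.2.1, iff_of_false hm (not_not_intro hqF)⟩
    exact ⟨hchain.tail ⟨h2.1, hm, hq⟩, hq⟩

include ha0 haadd hfree in
theorem hbd_preconnected (hd : 2 ≤ d) (hFfin : F.Finite)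
    (hFconn : ConnWithin d a F)
    (hvis : ∀ x y : X, ActAdj d a x y → x ∈ F → y ∉ F →
      (compOutside d a F y).Infinite) :
    (HBoundary d a F).Preconnected := by
  classical
  intro E E'
  by_contra hnr
  obtain ⟨x, y, hval, hadj, hxF, hyF⟩ := E.2
  obtain ⟨x', y', hval', hadj', hxF', hyF'⟩ := E'.2
  set P : Set (Sym2 X) :=
    {f | ∃ hf : f ∈ bdSym d a F, (HBoundary d a F).Reachable E ⟨f, hf⟩} with hPdef
  have hPsub : P ⊆ bdSym d a F := by
    intro f hf
    obtain ⟨h, _⟩ := hf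
    exact h
  have hPadj : ∀ (f g : Sym2 X) (hf : f ∈ bdSym d a F) (hg : g ∈ bdSym d a F),
      (HBoundary d a F).Adj ⟨f, hf⟩ ⟨g, hg⟩ → (f ∈ P ↔ g ∈ P) := by
    intro f g hf hg hAdj
    constructor
    · rintro ⟨hf', hre⟩
      exact ⟨hg, hre.trans hAdj.reachable⟩
    · rintro ⟨hg', hre⟩
      exact ⟨hf, hre.trans hAdj.symm.reachable⟩
  have hEP : E.val ∈ P := by
    refine ⟨E.2, ?_⟩
    rw [Subtype.coe_eta]
  have hE'nP : E'.val ∉ P := by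
    rintro ⟨h, hre⟩
    rw [Subtype.coe_eta] at hre
    exact hnr hre
  -- the pulled-back edge predicate, based at x
  set b : (Fin d → ℤ) → (Fin d → ℤ) → Prop :=
    fun u v => s(a u x, a v x) ∈ P with hbdef
  have hbsymm : ∀ u v, b u v ↔ b v u := by
    intro u v
    rw [hbdef]
    simp only
    rw [Sym2.eq_swap]
  -- steps for the two boundary edges
  obtain ⟨γb, hγb, hγbeq⟩ := hadj
  obtain ⟨γ', hγ', hγ'eq⟩ := hadj'
  -- L1 : path within F from x to x'
  obtain ⟨u1, hu1, hrtg1⟩ := lift_rtg a haadd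
    (r := fun u v => u ∈ F ∧ v ∈ F ∧ ActAdj d a u v)
    (fun p q hpq => hpq.2.2) (hFconn x hxF x' hxF') x 0 (ha0 x)
  obtain ⟨L1, hL1Γ, hL1sum, hL1cc⟩ := chain_list b
    (rc := fun s t => t - s ∈ Gamma1 d ∧
      ((a s x) ∈ F ∧ (a t x) ∈ F ∧ ActAdj d a (a s x) (a t x)))
    (fun u v huv => ⟨huv.1, fun hb =>
      not_bd_both_in a F ha0 haadd huv.2.1 huv.2.2.1 (hPsub hb)⟩) hrtg1
  rw [zero_add] at hL1sum
  -- bound for the preimage of F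
  have hinj : ∀ {γ δ : Fin d → ℤ}, a γ x = a δ x → γ = δ :=
    fun h => act_inj a ha0 haadd hfree h
  set T : Set (Fin d → ℤ) := {γ : Fin d → ℤ | a γ x ∈ F} with hTdef
  have hTfin : T.Finite := by
    apply Set.Finite.preimage (f := fun γ => a γ x) (fun γ _ δ _ h => hinj h) hFfin
  obtain ⟨R, hR⟩ := finite_bound hTfin
  -- outside chains
  have houtlift : ∀ (y₀ : X) (u₀ : Fin d → ℤ), a u₀ x = y₀ → y₀ ∉ F →
      (compOutside d a F y₀).Infinite →
      ∃ z : Fin d → ℤ, (∃ i, R < (z i).natAbs) ∧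
        Relation.ReflTransGen (rcStep T) u₀ z := by
    intro y₀ u₀ hu₀ hy₀F hinf
    have hrange : compOutside d a F y₀ ⊆ Set.range (fun γ => a γ x) := by
      intro w hw
      obtain ⟨wγ, hwγ, _⟩ := lift_rtg a haadd
        (r := fun u v => ActAdj d a u v ∧ (u, v) ∉ edgeBd d a F)
        (fun p q hpq => hpq.1) hw x u₀ hu₀
      exact ⟨wγ, hwγ⟩
    have hpre : {γ : Fin d → ℤ | a γ x ∈ compOutside d a F y₀}.Infinite := by
      apply Set.Infinite.preimage hinf
      intro w hw
      obtain ⟨wγ, hwγ⟩ := hrange hw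
      exact ⟨wγ, hwγ⟩
    obtain ⟨z, hzmem, i, hzi⟩ := infinite_unbounded hpre R
    refine ⟨z, ⟨i, hzi⟩, ?_⟩
    obtain ⟨w2, hw2, hchain⟩ := lift_rtg a haadd
      (r := fun u v => ActAdj d a u v ∧ (u, v) ∉ edgeBd d a F)
      (fun p q hpq => hpq.1) hzmem x u₀ hu₀
    have hzw2 : w2 = z := hinj (by rw [hw2])
    rw [← hzw2]
    refine (outside_invariant a F x ?_ (by rw [hu₀]; exact hy₀F)).1
    exact hchain
  -- chain for y' (from position u1 + γ')
  have hΦy' : a (u1 + γ') x = y' := by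
    rw [add_comm, haadd, hu1, hγ'eq]
  obtain ⟨z', hz'big, hz'chain⟩ := houtlift y' (u1 + γ') hΦy' hyF'
    (hvis x' y' ⟨γ', hγ', hγ'eq⟩ hxF' hyF')
  -- chain for y (from position γb)
  have hΦy : a γb x = y := hγbeq
  obtain ⟨z, hzbig, hzchain⟩ := houtlift y γb hΦy hyF
    (hvis x y ⟨γb, hγb, hγbeq⟩ hxF hyF)
  -- connect z' to z outside T
  obtain ⟨i', hi'⟩ := hz'big
  obtain ⟨i, hi⟩ := hzbig
  have hzz' : Relation.ReflTransGen (rcStep T) z' z := by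
    have h1 := conn_outside hd hR hi'
    have h2 := conn_outside hd hR hi
    exact h1.trans (by
      haveI : Std.Symm (rcStep T) := ⟨fun u v h => rcStep_symm T h⟩
      exact Std.Symm.symm _ _ h2)
  -- total outside chain from u1 + γ' to γb
  have houtside : Relation.ReflTransGen (rcStep T) (u1 + γ') γb :=
    (hz'chain.trans hzz').trans
      (by
        haveI : Std.Symm (rcStep T) := ⟨fun u v h => rcStep_symm T h⟩
        exact Std.Symm.symm _ _ hzchain)
  obtain ⟨L3, hL3Γ, hL3sum, hL3cc⟩ := chain_list b
    (rc := rcStep T)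
    (fun u v huv => ⟨huv.1, fun hb =>
      not_bd_both_out a F ha0 haadd huv.2.1 huv.2.2 (hPsub hb)⟩) houtside
  -- assemble the loop
  set L : List (Fin d → ℤ) := L1 ++ γ' :: (L3 ++ [-γb]) with hLdef
  have hLΓ : ∀ γ ∈ L, γ ∈ Gamma1 d := by
    intro γ hγmem
    rw [hLdef] at hγmem
    rcases List.mem_append.1 hγmem with h | h
    · exact hL1Γ γ h
    · rcases List.mem_cons.1 h with rfl | h'
      · exact hγ'
      · rcases List.mem_append.1 h' with h'' | h''
        · exact hL3Γ γ h''
        · rw [List.mem_singleton.1 h'']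
          exact neg_mem_Gamma1 hγb
  have hLsum : L.sum = 0 := by
    rw [hLdef]
    simp only [List.sum_append, List.sum_cons, List.sum_singleton]
    have h3 : (u1 + γ') + L3.sum = γb := hL3sum
    have h1 : L1.sum = u1 := hL1sum
    rw [h1]
    have : L3.sum = γb - u1 - γ' := by
      have := h3
      abel_nf at this ⊢
      linear_combination (norm := abel_nf) this
    rw [this]
    abel
  have hccL : cc b 0 L = 1 := by
    rw [hLdef, cc_append, hL1cc, hL1sum, zero_add, zero_add, cc_cons]
    have hbval' : ¬ b u1 (u1 + γ') := by
      show ¬ (s(a u1 x, a (u1 + γ') x) ∈ P)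
      rw [hu1, hΦy', ← hval']
      exact hE'nP
    rw [if_neg hbval', zero_add, cc_append, hL3cc, zero_add, hL3sum, cc_cons, cc_nil]
    have hγb0 : γb + -γb = 0 := by abel
    have hbval : b γb (γb + -γb) := by
      show s(a γb x, a (γb + -γb) x) ∈ P
      rw [hγb0, ha0, hΦy, Sym2.eq_swap, ← hval]
      exact hEP
    rw [if_pos hbval]
  have hfin := closed_even hbsymm
    (fun u γ δ hγ hδ hγδ => tri_even a F ha0 haadd hfree P hPsub hPadj x u γ δ hγ hδ hγδ)
    L hLΓ hLsum 0
  rw [hccL] at hfin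
  exact (Nat.not_even_iff_odd.2 odd_one) hfin

end XAux

namespace XAux

open ZdAux

variable {X : Type*} {d : ℕ} (a : (Fin d → ℤ) → X → X) (F : Set X)
variable (ha0 : ∀ x : X, a 0 x = x)
  (haadd : ∀ (g g' : Fin d → ℤ) (x : X), a (g + g') x = a g (a g' x))
  (hfree : ∀ (g : Fin d → ℤ) (x : X), a g x = x → g = 0)

include ha0 haadd hfree in
lemma actAdj_ne {p q : X} (h : ActAdj d a p q) : p ≠ q := by
  obtain ⟨γ, hγ, heq⟩ := h
  intro hc
  rw [hc] at heq
  exact (mem_Gamma1_iff.1 hγ).1 (hfree γ q heq)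

include ha0 haadd hfree in
lemma adj_structure {v w : {e : Sym2 X // e ∈ bdSym d a F}}
    (h : (HBoundary d a F).Adj v w) :
    ∃ (c vv ww : X), v.val = s(c, vv) ∧ w.val = s(c, ww) ∧ ActAdj d a c vv ∧
      ActAdj d a c ww ∧ ActAdj d a vv ww := by
  rw [HBoundary, SimpleGraph.fromRel_adj] at h
  obtain ⟨hne, hrel⟩ := h
  have hvalne : v.val ≠ w.val := fun hc => hne (Subtype.ext hc)
  have main : ∀ p q r : X, ActAdj d a p q → ActAdj d a q r → ActAdj d a r p →
      (v.val = s(p, q) ∨ v.val = s(q, r) ∨ v.val = s(r, p)) →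
      (w.val = s(p, q) ∨ w.val = s(q, r) ∨ w.val = s(r, p)) →
      ∃ (c vv ww : X), v.val = s(c, vv) ∧ w.val = s(c, ww) ∧ ActAdj d a c vv ∧
        ActAdj d a c ww ∧ ActAdj d a vv ww := by
    intro p q r hpq hqr hrp hv3 hw3
    have hpq' := actAdj_symm a ha0 haadd hpq
    have hqr' := actAdj_symm a ha0 haadd hqr
    have hrp' := actAdj_symm a ha0 haadd hrp
    rcases hv3 with hv | hv | hv <;> rcases hw3 with hw | hw | hw
    · exact absurd (hv.trans hw.symm) hvalne
    · exact ⟨q, p, r, by rw [hv, Sym2.eq_swap], hw, hpq', hqr, hrp'⟩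
    · exact ⟨p, q, r, hv, by rw [hw, Sym2.eq_swap], hpq, hrp', hqr⟩
    · exact ⟨q, r, p, hv, by rw [hw, Sym2.eq_swap], hqr, hpq', hrp⟩
    · exact absurd (hv.trans hw.symm) hvalne
    · exact ⟨r, q, p, by rw [hv, Sym2.eq_swap], hw, hqr', hrp, hpq'⟩
    · exact ⟨p, r, q, by rw [hv, Sym2.eq_swap], hw, hrp', hpq, hqr'⟩
    · exact ⟨r, p, q, hv, by rw [hw, Sym2.eq_swap], hrp, hqr', hpq⟩
    · exact absurd (hv.trans hw.symm) hvalne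
  rcases hrel with ⟨p, q, r, h1, h2, h3, ha', hb'⟩ | ⟨p, q, r, h1, h2, h3, ha', hb'⟩
  · exact main p q r h1 h2 h3 ha' hb'
  · exact main p q r h1 h2 h3 hb' ha'

end XAux

namespace XAux

open ZdAux

variable {X : Type*} {d : ℕ} (a : (Fin d → ℤ) → X → X) (F : Set X)
variable (ha0 : ∀ x : X, a 0 x = x)
  (haadd : ∀ (g g' : Fin d → ℤ) (x : X), a (g + g') x = a g (a g' x))
  (hfree : ∀ (g : Fin d → ℤ) (x : X), a g x = x → g = 0)

include ha0 haadd hfree in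
lemma even_neighbor_card [Fintype {e : Sym2 X // e ∈ bdSym d a F}]
    [DecidableRel (HBoundary d a F).Adj]
    (v : {e : Sym2 X // e ∈ bdSym d a F}) :
    Even ((HBoundary d a F).neighborFinset v).card := by
  classical
  obtain ⟨x, y, hval, hadjxy, hxF, hyF⟩ := v.2
  obtain ⟨γb, hγb, hγbeq⟩ := id hadjxy
  have hinj : ∀ {γ δ : Fin d → ℤ}, a γ x = a δ x → γ = δ :=
    fun h => act_inj a ha0 haadd hfree h
  have hγbcoord := (mem_Gamma1_iff.1 hγb).2
  have hγb0 : γb ≠ 0 := (mem_Gamma1_iff.1 hγb).1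
  set S : Fin d → Finset ℤ :=
    fun i => ({-1, 0, 1} : Finset ℤ) ∩ ({γb i - 1, γb i, γb i + 1} : Finset ℤ) with hS
  set D : Finset (Fin d → ℤ) := ((Fintype.piFinset S).erase 0).erase γb with hD
  have hSi : ∀ i, S i = ({-1, 0, 1} : Finset ℤ) ∩ ({γb i - 1, γb i, γb i + 1} : Finset ℤ) :=
    fun i => rfl
  have hDmem : ∀ δ ∈ D, δ ≠ 0 ∧ δ ≠ γb ∧ δ ∈ Gamma1 d ∧ δ - γb ∈ Gamma1 d := by
    intro δ hδ
    rw [hD, Finset.mem_erase, Finset.mem_erase, Fintype.mem_piFinset] at hδ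
    obtain ⟨hδγb, hδ0, hδpi⟩ := hδ
    have hcoords : ∀ i, (δ i = -1 ∨ δ i = 0 ∨ δ i = 1) ∧
        (δ i - γb i = -1 ∨ δ i - γb i = 0 ∨ δ i - γb i = 1) := by
      intro i
      have := hδpi i
      rw [hSi i] at this
      simp only [Finset.mem_inter, Finset.mem_insert, Finset.mem_singleton] at this
      exact ⟨this.1, by omega⟩
    refine ⟨hδ0, hδγb, ?_, ?_⟩
    · exact mem_Gamma1_iff.2 ⟨hδ0, fun i => (hcoords i).1⟩
    · refine mem_Gamma1_iff.2 ⟨sub_ne_zero.2 hδγb, fun i => ?_⟩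
      simpa using (hcoords i).2
  have hz_adj_x : ∀ δ ∈ D, ActAdj d a x (a δ x) :=
    fun δ hδ => ⟨δ, (hDmem δ hδ).2.2.1, rfl⟩
  have hz_adj_y : ∀ δ ∈ D, ActAdj d a y (a δ x) := by
    intro δ hδ
    refine ⟨δ - γb, (hDmem δ hδ).2.2.2, ?_⟩
    rw [← hγbeq, ← haadd, sub_add_cancel]
  have hzx : ∀ δ ∈ D, a δ x ≠ x := by
    intro δ hδ hc
    exact (hDmem δ hδ).1 (hinj (hc.trans (ha0 x).symm))
  have hzy : ∀ δ ∈ D, a δ x ≠ y := by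
    intro δ hδ hc
    rw [← hγbeq] at hc
    exact (hDmem δ hδ).2.1 (hinj hc)
  have hedge : ∀ δ ∈ D, (if a δ x ∈ F then s(a δ x, y) else s(x, a δ x)) ∈ bdSym d a F := by
    intro δ hδ
    by_cases hzF : a δ x ∈ F
    · rw [if_pos hzF]
      exact (mem_bdSym_iff a F ha0 haadd).2
        ⟨actAdj_symm a ha0 haadd (hz_adj_y δ hδ), Or.inl ⟨hzF, hyF⟩⟩
    · rw [if_neg hzF]
      exact (mem_bdSym_iff a F ha0 haadd).2 ⟨hz_adj_x δ hδ, Or.inl ⟨hxF, hzF⟩⟩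
  -- adjacency for both possible shapes of the mapped edge
  have hadjmap0 : ∀ (f : Sym2 X) (hf : f ∈ bdSym d a F), ∀ δ ∈ D,
      (f = s(a δ x, y) ∨ f = s(x, a δ x)) → (HBoundary d a F).Adj v ⟨f, hf⟩ := by
    intro f hf δ hδ hcase
    rw [HBoundary, SimpleGraph.fromRel_adj]
    constructor
    · intro hc
      have hc' := congrArg Subtype.val hc
      simp only at hc'
      rw [hval] at hc'
      rcases hcase with rfl | rfl
      · rcases Sym2.eq_iff.1 hc' with ⟨h1, _⟩ | ⟨h1, h2⟩
        · exact hzx δ hδ h1.symm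
        · exact hzy δ hδ h2.symm
      · rcases Sym2.eq_iff.1 hc' with ⟨_, h2⟩ | ⟨h1, h2⟩
        · exact hzy δ hδ h2.symm
        · exact hzx δ hδ h1.symm
    · refine Or.inl ⟨x, y, a δ x, hadjxy, hz_adj_y δ hδ,
        ⟨-δ, neg_mem_Gamma1 (hDmem δ hδ).2.2.1, by rw [← haadd, neg_add_cancel, ha0]⟩,
        Or.inl hval, ?_⟩
      rcases hcase with rfl | rfl
      · exact Or.inr (Or.inl Sym2.eq_swap)
      · exact Or.inr (Or.inr Sym2.eq_swap)
  have hadjmap : ∀ δ (hδ : δ ∈ D),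
      (HBoundary d a F).Adj v ⟨_, hedge δ hδ⟩ := by
    intro δ hδ
    refine hadjmap0 _ (hedge δ hδ) δ hδ ?_
    by_cases hzF : a δ x ∈ F
    · exact Or.inl (if_pos hzF)
    · exact Or.inr (if_neg hzF)
  have hcardeq : D.card = ((HBoundary d a F).neighborFinset v).card := by
    refine Finset.card_bij (fun δ hδ => ⟨_, hedge δ hδ⟩) ?_ ?_ ?_
    · intro δ hδ
      rw [SimpleGraph.mem_neighborFinset]
      exact hadjmap δ hδ
    · -- injectivity
      intro δ hδ δ' hδ' heq
      have heq' := congrArg Subtype.val heq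
      simp only at heq'
      by_contra hne
      have hzne : a δ x ≠ a δ' x := fun hc => hne (hinj hc)
      by_cases h1 : a δ x ∈ F <;> by_cases h2 : a δ' x ∈ F
      · rw [if_pos h1, if_pos h2] at heq'
        rcases Sym2.eq_iff.1 heq' with ⟨h3, _⟩ | ⟨h3, h4⟩
        · exact hzne h3
        · exact hzy δ hδ h3
      · rw [if_pos h1, if_neg h2] at heq'
        rcases Sym2.eq_iff.1 heq' with ⟨h3, h4⟩ | ⟨h3, h4⟩
        · exact hzx δ hδ h3
        · exact hzne h3
      · rw [if_neg h1, if_pos h2] at heq'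
        rcases Sym2.eq_iff.1 heq' with ⟨h3, h4⟩ | ⟨h3, h4⟩
        · exact hzx δ' hδ' h3.symm
        · exact hzne h4
      · rw [if_neg h1, if_neg h2] at heq'
        rcases Sym2.eq_iff.1 heq' with ⟨_, h4⟩ | ⟨h3, h4⟩
        · exact hzne h4
        · exact hzx δ hδ h4
    · -- surjectivity
      intro w hw
      rw [SimpleGraph.mem_neighborFinset] at hw
      obtain ⟨c, vv, ww, hv, hwv, hcvv, hcww, hvvww⟩ :=
        adj_structure a F ha0 haadd hfree hw
      have hwne : w.val ≠ v.val := fun hc => (hw.ne) (Subtype.ext hc).symm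
      have hwbd := w.2
      rw [hval] at hv
      have hwwne : ∀ t : X, w.val = s(t, t) → False := by
        intro t hc
        obtain ⟨x1, y1, hxy1, _, hx1, hy1⟩ := hwbd
        rw [hc] at hxy1
        rcases Sym2.eq_iff.1 hxy1 with ⟨h1, h2⟩ | ⟨h1, h2⟩
        · apply hy1; rw [← h2, h1]; exact hx1
        · apply hy1; rw [← h1, h2]; exact hx1
      rcases Sym2.eq_iff.1 hv with ⟨rfl, rfl⟩ | ⟨rfl, rfl⟩
      · -- c = x, vv = y
        obtain ⟨δ, hδΓ, hδeq⟩ := hcww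
        obtain ⟨ε, hεΓ, hεeq⟩ := hvvww
        have hδ' : δ = ε + γb := hinj (by rw [haadd, hγbeq, hεeq, hδeq])
        have hδε : δ - γb = ε := by rw [hδ']; abel
        have hww_ne_x : ww ≠ x := by
          intro hc
          exact hwwne x (by rw [hwv, hc])
        have hww_ne_y : ww ≠ y := by
          intro hc
          apply hwne
          rw [hwv, hc, hval]
        have hδD : δ ∈ D := by
          rw [hD, Finset.mem_erase, Finset.mem_erase, Fintype.mem_piFinset]
          refine ⟨?_, ?_, ?_⟩
          · intro hc
            exact hww_ne_y (by rw [← hδeq, hc, hγbeq])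
          · intro hc
            exact hww_ne_x (by rw [← hδeq, hc, ha0])
          · intro i
            rw [hS]
            simp only [Finset.mem_inter, Finset.mem_insert, Finset.mem_singleton]
            have c1 := (mem_Gamma1_iff.1 hδΓ).2 i
            have c2 := (mem_Gamma1_iff.1 hεΓ).2 i
            rw [← hδε] at c2
            simp only [Pi.sub_apply] at c2
            exact ⟨c1, by omega⟩
        have hwwF : ww ∉ F := by
          intro hc
          obtain ⟨hadj2, hcase⟩ := (mem_bdSym_iff a F ha0 haadd).1 (hwv ▸ hwbd)
          rcases hcase with ⟨_, h2⟩ | ⟨_, h2⟩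
          · exact h2 hc
          · exact h2 hxF
        refine ⟨δ, hδD, ?_⟩
        apply Subtype.ext
        simp only
        rw [hδeq, if_neg (fun hc => hwwF hc), hwv]
      · -- c = y, vv = x
        obtain ⟨ε, hεΓ, hεeq⟩ := hcww
        obtain ⟨δ, hδΓ, hδeq⟩ := hvvww
        have hδ' : δ = ε + γb := hinj (by rw [haadd, hγbeq, hεeq, hδeq])
        have hδε : δ - γb = ε := by rw [hδ']; abel
        have hww_ne_x : ww ≠ x := by
          intro hc
          apply hwne
          rw [hwv, hc, hval, Sym2.eq_swap]
        have hww_ne_y : ww ≠ y := by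
          intro hc
          exact hwwne y (by rw [hwv, hc])
        have hδD : δ ∈ D := by
          rw [hD, Finset.mem_erase, Finset.mem_erase, Fintype.mem_piFinset]
          refine ⟨?_, ?_, ?_⟩
          · intro hc
            exact hww_ne_y (by rw [← hδeq, hc, hγbeq])
          · intro hc
            exact hww_ne_x (by rw [← hδeq, hc, ha0])
          · intro i
            rw [hS]
            simp only [Finset.mem_inter, Finset.mem_insert, Finset.mem_singleton]
            have c1 := (mem_Gamma1_iff.1 hδΓ).2 i
            have c2 := (mem_Gamma1_iff.1 hεΓ).2 i
            rw [← hδε] at c2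
            simp only [Pi.sub_apply] at c2
            exact ⟨c1, by omega⟩
        have hwwF : ww ∈ F := by
          obtain ⟨hadj2, hcase⟩ := (mem_bdSym_iff a F ha0 haadd).1 (hwv ▸ hwbd)
          rcases hcase with ⟨h1, _⟩ | ⟨h1, _⟩
          · exact absurd h1 hyF
          · exact h1
        refine ⟨δ, hδD, ?_⟩
        apply Subtype.ext
        simp only
        rw [hδeq, if_pos hwwF, hwv, Sym2.eq_swap]
  -- D has even cardinality
  rw [← hcardeq]
  obtain ⟨i₀, hi₀⟩ : ∃ i₀, γb i₀ ≠ 0 := by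
    by_contra hc
    push_neg at hc
    exact hγb0 (funext hc)
  have hγbS : γb ∈ Fintype.piFinset S := by
    rw [Fintype.mem_piFinset]
    intro i
    rw [hSi i]
    refine Finset.mem_inter.2 ⟨?_, ?_⟩
    · simp only [Finset.mem_insert, Finset.mem_singleton]
      exact hγbcoord i
    · exact Finset.mem_insert_of_mem (Finset.mem_insert_self _ _)
  have h0S : (0 : Fin d → ℤ) ∈ Fintype.piFinset S := by
    rw [Fintype.mem_piFinset]
    intro i
    rw [hSi i]
    refine Finset.mem_inter.2 ⟨?_, ?_⟩
    · simp only [Finset.mem_insert, Finset.mem_singleton, Pi.zero_apply]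
      tauto
    · simp only [Finset.mem_insert, Finset.mem_singleton, Pi.zero_apply]
      have := hγbcoord i
      omega
  have hmem1 : γb ∈ (Fintype.piFinset S).erase 0 := Finset.mem_erase.2 ⟨hγb0, hγbS⟩
  have hcard2 : D.card = (Fintype.piFinset S).card - 2 := by
    rw [hD, Finset.card_erase_of_mem hmem1, Finset.card_erase_of_mem h0S]
    omega
  have hprod : (Fintype.piFinset S).card = ∏ i, (S i).card := Fintype.card_piFinset S
  have heven : Even (Fintype.piFinset S).card := by
    rw [hprod, even_iff_two_dvd]
    have hdvd : (S i₀).card ∣ ∏ i, (S i).card :=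
      Finset.dvd_prod_of_mem (fun i => (S i).card) (Finset.mem_univ i₀)
    have h2 : (S i₀).card = 2 := by
      rcases hγbcoord i₀ with h | h | h
      · rw [hSi i₀, h]; decide
      · exact absurd h hi₀
      · rw [hSi i₀, h]; decide
    exact h2 ▸ hdvd
  have hge2 : 2 ≤ (Fintype.piFinset S).card := by
    have hsub : ({0, γb} : Finset (Fin d → ℤ)) ⊆ Fintype.piFinset S := by
      intro t ht
      rcases Finset.mem_insert.1 ht with rfl | ht'
      · exact h0S
      · rw [Finset.mem_singleton.1 ht']
        exact hγbS
    have hcard01 : ({0, γb} : Finset (Fin d → ℤ)).card = 2 := by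
      rw [Finset.card_insert_of_notMem (by simpa using hγb0.symm), Finset.card_singleton]
    calc 2 = ({0, γb} : Finset (Fin d → ℤ)).card := hcard01.symm
      _ ≤ _ := Finset.card_le_card hsub
  rw [hcard2]
  rw [Nat.even_iff] at heven ⊢
  omega

end XAux

namespace EulerAux

variable {V : Type*} [Fintype V] [DecidableEq V]

lemma card_inc_eq (G : SimpleGraph V) [DecidableRel G.Adj] (z : V) :
    (inc G z).card = (G.neighborFinset z).card := by
  classical
  refine (Finset.card_bij (fun w _ => s(z, w)) ?_ ?_ ?_).symm
  · intro w hw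
    rw [SimpleGraph.mem_neighborFinset] at hw
    simp only [inc, Finset.mem_filter, SimpleGraph.mem_edgeFinset]
    exact ⟨(SimpleGraph.mem_edgeSet G).2 hw, Sym2.mem_mk_left _ _⟩
  · intro w1 h1 w2 h2 heq
    rcases Sym2.eq_iff.1 heq with ⟨_, h⟩ | ⟨h, h'⟩
    · exact h
    · rw [h']
      exact h
  · intro e he
    simp only [inc, Finset.mem_filter, SimpleGraph.mem_edgeFinset] at he
    obtain ⟨hedge, hz⟩ := he
    induction e with
    | h p q =>
      rcases Sym2.mem_iff.1 hz with rfl | rfl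
      · exact ⟨q, SimpleGraph.mem_neighborFinset _ _ _ |>.2
          ((SimpleGraph.mem_edgeSet G).1 hedge), rfl⟩
      · refine ⟨p, SimpleGraph.mem_neighborFinset _ _ _ |>.2
          ((SimpleGraph.mem_edgeSet G).1 (by rwa [Sym2.eq_swap] at hedge)), Sym2.eq_swap⟩

end EulerAux

/-- **Euler cycles on boundaries.** Let `d ≥ 2`, let `a : ℤᵈ ↷ X` be a free action with
associated graph `G_a`, and let `F ⊆ X` be a finite (nonempty) `G_a`-connected set with
`∂_vis(∞) F = ∂F`.  Then `H_{∂F}` has an Euler cycle: a closed walk traversing every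
edge exactly once. -/
theorem euler_cycle_on_boundary {X : Type*} (d : ℕ) (hd : 2 ≤ d)
    (a : (Fin d → ℤ) → X → X)
    (ha0 : ∀ x : X, a 0 x = x)
    (haadd : ∀ (g g' : Fin d → ℤ) (x : X), a (g + g') x = a g (a g' x))
    (hfree : ∀ (g : Fin d → ℤ) (x : X), a g x = x → g = 0)
    (F : Set X) (hFfin : F.Finite) (hFne : F.Nonempty)
    (hFconn : ConnWithin d a F)
    (hvis : ∀ x y : X, ActAdj d a x y → x ∈ F → y ∉ F →
      (compOutside d a F y).Infinite) :
    ∃ (v : {e : Sym2 X // e ∈ bdSym d a F}) (w : (HBoundary d a F).Walk v v),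
      w.IsEulerian := by
  classical
  -- the boundary is a finite set of edges
  have hbdfin : (bdSym d a F).Finite := by
    have himg : bdSym d a F ⊆ (fun p : X × (Fin d → ℤ) => s(p.1, a p.2 p.1)) ''
        (F ×ˢ (↑(Gamma1 d) : Set (Fin d → ℤ))) := by
      rintro e ⟨x, y, rfl, ⟨γ, hγ, hγeq⟩, hxF, hyF⟩
      exact ⟨(x, γ), ⟨hxF, hγ⟩, by show s(x, a γ x) = s(x, y); rw [hγeq]⟩
    exact (Set.Finite.image _ (hFfin.prod (Gamma1 d).finite_toSet)).subset himg
  haveI hFT : Fintype {e : Sym2 X // e ∈ bdSym d a F} := hbdfin.fintype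
  haveI : DecidableRel (HBoundary d a F).Adj := Classical.decRel _
  -- the boundary is nonempty
  obtain ⟨x₀, hx₀⟩ := hFne
  have hinj : ∀ {γ δ : Fin d → ℤ}, a γ x₀ = a δ x₀ → γ = δ :=
    fun h => XAux.act_inj a ha0 haadd hfree h
  have hTfin : {γ : Fin d → ℤ | a γ x₀ ∈ F}.Finite :=
    Set.Finite.preimage (fun γ _ δ _ h => hinj h) hFfin
  have hTne : (hTfin.toFinset).Nonempty :=
    ⟨0, by rw [Set.Finite.mem_toFinset]; simpa [ha0 x₀] using hx₀⟩
  set i0 : Fin d := ⟨0, by omega⟩ with hi0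
  obtain ⟨γm, hγm, hγmax⟩ := hTfin.toFinset.exists_max_image (fun γ => γ i0) hTne
  rw [Set.Finite.mem_toFinset] at hγm
  set δ0 : Fin d → ℤ := γm + Pi.single i0 1 with hδ0
  have hδ0out : a δ0 x₀ ∉ F := by
    intro hc
    have hmem : δ0 ∈ hTfin.toFinset := by rw [Set.Finite.mem_toFinset]; exact hc
    have := hγmax δ0 hmem
    rw [hδ0] at this
    simp only [Pi.add_apply, Pi.single_eq_same] at this
    omega
  have he0 : s(a γm x₀, a δ0 x₀) ∈ bdSym d a F := by
    refine ⟨a γm x₀, a δ0 x₀, rfl, ?_, hγm, hδ0out⟩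
    refine ⟨Pi.single i0 1, ZdAux.unit_mem_Gamma1 ⟨i0, 1, Or.inl rfl, rfl⟩, ?_⟩
    rw [← haadd]
    congr 1
    rw [hδ0]
    abel
  haveI hne : Nonempty {e : Sym2 X // e ∈ bdSym d a F} := ⟨⟨_, he0⟩⟩
  -- even incidence counts
  have heven : ∀ z : {e : Sym2 X // e ∈ bdSym d a F},
      Even (EulerAux.inc (HBoundary d a F) z).card := by
    intro z
    rw [EulerAux.card_inc_eq]
    exact XAux.even_neighbor_card a F ha0 haadd hfree z
  exact EulerAux.exists_eulerian (HBoundary d a F) hne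
    (XAux.hbd_preconnected a F ha0 haadd hfree hd hFfin hFconn hvis) heven
end

section
/- Let d ≥ 2 and let G be the graph on vertex set ℤ^d with an edge between x and y iff ‖x − y‖_∞ = 1. Then the 3-cycles of G generate the cycle space of G over the field with two elements: every cycle of G is the mod-2 edgewise sum of finitely many 3-cycles of G. -/
open Finset

open scoped Classical

/-- The graph on `ℤᵈ` with an edge between `x` and `y` iff `‖x − y‖_∞ = 1`, i.e. iff
`x ≠ y` and `|x i − y i| ≤ 1` for all `i`. -/
def latticeGraph (d : ℕ) : SimpleGraph (Fin d → ℤ) :=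
  SimpleGraph.fromRel (fun x y => ∀ i, |x i - y i| ≤ 1)

namespace LatticeTri

variable {d : ℕ}

abbrev V (d : ℕ) := Fin d → ℤ
abbrev F (d : ℕ) := Sym2 (V d) → ZMod 2

noncomputable def χ (e : Sym2 (V d)) : F d := fun f => if f = e then 1 else 0

lemma add_self (v : F d) : v + v = 0 := by
  funext e
  have h : ∀ x : ZMod 2, x + x = 0 := by decide
  exact h (v e)

def near (x y : V d) : Prop := ∀ i, |x i - y i| ≤ 1

lemma near.symm {x y : V d} (h : near x y) : near y x := fun i => by
  rw [abs_sub_comm]; exact h i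

lemma adj_iff {x y : V d} : (latticeGraph d).Adj x y ↔ x ≠ y ∧ near x y := by
  unfold latticeGraph
  rw [SimpleGraph.fromRel_adj]
  constructor
  · rintro ⟨h, h2 | h2⟩
    exacts [⟨h, h2⟩, ⟨h, near.symm h2⟩]
  · rintro ⟨h, h2⟩; exact ⟨h, Or.inl h2⟩

def sgn (t : ℤ) : ℤ := if 0 < t then 1 else if t < 0 then -1 else 0

lemma sgn_spec (t : ℤ) : (0 < t ∧ sgn t = 1) ∨ (t < 0 ∧ sgn t = -1) ∨ (t = 0 ∧ sgn t = 0) := by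
  unfold sgn; split_ifs <;> omega

def stp (a b : V d) : V d := fun i => a i + sgn (b i - a i)

def D (a b : V d) : ℕ := Finset.univ.sup fun i => (a i - b i).natAbs

lemma D_eq_zero {a b : V d} (h : D a b = 0) : a = b := by
  funext i
  have h2 : (a i - b i).natAbs ≤ D a b := Finset.le_sup (f := fun j => (a j - b j).natAbs) (mem_univ i)
  omega

lemma D_pos {a b : V d} (h : a ≠ b) : 0 < D a b := by
  rcases Nat.eq_zero_or_pos (D a b) with h0 | h0
  · exact absurd (D_eq_zero h0) h
  · exact h0

lemma D_lt {a b : V d} (h : a ≠ b) : D (stp a b) b < D a b := by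
  have hpos := D_pos h
  rw [D, Finset.sup_lt_iff (by exact hpos)]
  intro i _
  have h2 : (a i - b i).natAbs ≤ D a b := Finset.le_sup (f := fun j => (a j - b j).natAbs) (mem_univ i)
  rcases sgn_spec (b i - a i) with ⟨h3, h4⟩ | ⟨h3, h4⟩ | ⟨h3, h4⟩ <;>
    simp only [stp, h4] <;> omega

lemma near_stp (a b : V d) : near a (stp a b) := by
  intro i
  rw [abs_le]
  rcases sgn_spec (b i - a i) with ⟨h3, h4⟩ | ⟨h3, h4⟩ | ⟨h3, h4⟩ <;>
    simp only [stp, h4] <;> omega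

lemma stp_ne {a b : V d} (h : a ≠ b) : a ≠ stp a b := by
  intro he
  apply h; funext i
  have h1 : a i = stp a b i := congrFun he i
  rcases sgn_spec (b i - a i) with ⟨h3, h4⟩ | ⟨h3, h4⟩ | ⟨h3, h4⟩ <;>
    simp only [stp, h4] at h1 <;> omega

lemma adj_stp {a b : V d} (h : a ≠ b) : (latticeGraph d).Adj a (stp a b) :=
  adj_iff.mpr ⟨stp_ne h, near_stp a b⟩

lemma stp_eq_of_near {a b : V d} (h : near a b) : stp a b = b := by
  funext i
  have hi := h i; rw [abs_le] at hi
  rcases sgn_spec (b i - a i) with ⟨h3, h4⟩ | ⟨h3, h4⟩ | ⟨h3, h4⟩ <;>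
    simp only [stp, h4] <;> omega

lemma near_stp_stp {a c : V d} (b : V d) (h : near a c) : near (stp a b) (stp c b) := by
  intro i
  have hi := h i; rw [abs_le] at hi
  rw [abs_le]
  rcases sgn_spec (b i - a i) with ⟨h1, h2⟩ | ⟨h1, h2⟩ | ⟨h1, h2⟩ <;>
    rcases sgn_spec (b i - c i) with ⟨h3, h4⟩ | ⟨h3, h4⟩ | ⟨h3, h4⟩ <;>
    simp only [stp, h2, h4] <;> omega

noncomputable def canon (a b : V d) : F d :=
  if h : a = b then 0 else χ s(a, stp a b) + canon (stp a b) b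
termination_by D a b
decreasing_by exact D_lt h

lemma canon_self (a : V d) : canon a a = 0 := by rw [canon]; simp

lemma canon_ne {a b : V d} (h : a ≠ b) :
    canon a b = χ s(a, stp a b) + canon (stp a b) b := by
  rw [canon]; simp [h]


def IsTriClass (t : F d) : Prop :=
  ∃ p q r : V d, (latticeGraph d).Adj p q ∧ (latticeGraph d).Adj q r ∧
    (latticeGraph d).Adj r p ∧ t = χ s(p,q) + χ s(q,r) + χ s(r,p)

def InTriSpan (v : F d) : Prop :=
  ∃ L : List (F d), (∀ t ∈ L, IsTriClass t) ∧ v = L.sum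

lemma InTriSpan.zero : InTriSpan (0 : F d) := ⟨[], by simp, by simp⟩

lemma InTriSpan.add {v w : F d} (hv : InTriSpan v) (hw : InTriSpan w) : InTriSpan (v + w) := by
  obtain ⟨L1, h1, e1⟩ := hv; obtain ⟨L2, h2, e2⟩ := hw
  refine ⟨L1 ++ L2, ?_, by rw [e1, e2, List.sum_append]⟩
  intro t ht
  rcases List.mem_append.mp ht with h | h
  exacts [h1 t h, h2 t h]

lemma InTriSpan.single {t : F d} (h : IsTriClass t) : InTriSpan t := ⟨[t], by simpa, by simp⟩

lemma InTriSpan.of_eq {v w : F d} (hv : InTriSpan v) (h : v = w) : InTriSpan w := h ▸ hv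

/-- Any 4-cycle (possibly degenerate) in the lattice graph is a sum of triangles. -/
lemma quad {w x y z : V d} (hwx : (latticeGraph d).Adj w x) (hxy : (latticeGraph d).Adj x y)
    (hyz : (latticeGraph d).Adj y z) (hzw : (latticeGraph d).Adj z w) :
    InTriSpan (χ s(w,x) + χ s(x,y) + χ s(y,z) + χ s(z,w)) := by
  by_cases hwy : w = y
  · subst hwy
    refine InTriSpan.zero.of_eq ?_
    have e1 : s(x, w) = s(w, x) := Sym2.eq_swap
    have e2 : s(z, w) = s(w, z) := Sym2.eq_swap
    rw [e1, e2]
    calc (0 : F d) = (χ s(w,x) + χ s(w,x)) + (χ s(w,z) + χ s(w,z)) := by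
          rw [add_self, add_self, add_zero]
      _ = χ s(w,x) + χ s(w,x) + χ s(w,z) + χ s(w,z) := by abel
  by_cases hxz : x = z
  · subst hxz
    refine InTriSpan.zero.of_eq ?_
    have e1 : s(y, x) = s(x, y) := Sym2.eq_swap
    have e2 : s(x, w) = s(w, x) := Sym2.eq_swap
    calc (0 : F d) = (χ s(w,x) + χ s(w,x)) + (χ s(x,y) + χ s(x,y)) := by
          rw [add_self, add_self, add_zero]
      _ = χ s(w,x) + χ s(x,y) + (χ s(x,y)) + (χ s(w,x)) := by abel
      _ = χ s(w,x) + χ s(x,y) + χ s(y,x) + χ s(x,w) := by rw [e1, e2]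
  have hwxn := (adj_iff.mp hwx).2
  have hxyn := (adj_iff.mp hxy).2
  have hyzn := (adj_iff.mp hyz).2
  have hzwn := (adj_iff.mp hzw).2
  by_cases hwyA : near w y
  · -- diagonal w-y
    have hadj : (latticeGraph d).Adj w y := adj_iff.mpr ⟨hwy, hwyA⟩
    have t1 : IsTriClass (χ s(w,x) + χ s(x,y) + χ s(y,w)) := ⟨w, x, y, hwx, hxy, hadj.symm, rfl⟩
    have t2 : IsTriClass (χ s(w,y) + χ s(y,z) + χ s(z,w)) := ⟨w, y, z, hadj, hyz, hzw, rfl⟩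
    refine ((InTriSpan.single t1).add (InTriSpan.single t2)).of_eq ?_
    have e1 : s(y, w) = s(w, y) := Sym2.eq_swap
    rw [e1]
    calc χ s(w,x) + χ s(x,y) + χ s(w,y) + (χ s(w,y) + χ s(y,z) + χ s(z,w))
        = χ s(w,x) + χ s(x,y) + χ s(y,z) + χ s(z,w) + (χ s(w,y) + χ s(w,y)) := by abel
      _ = χ s(w,x) + χ s(x,y) + χ s(y,z) + χ s(z,w) := by rw [add_self, add_zero]
  by_cases hxzA : near x z
  · -- diagonal x-z
    have hadj : (latticeGraph d).Adj x z := adj_iff.mpr ⟨hxz, hxzA⟩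
    have t1 : IsTriClass (χ s(x,y) + χ s(y,z) + χ s(z,x)) := ⟨x, y, z, hxy, hyz, hadj.symm, rfl⟩
    have t2 : IsTriClass (χ s(x,z) + χ s(z,w) + χ s(w,x)) := ⟨x, z, w, hadj, hzw, hwx, rfl⟩
    refine ((InTriSpan.single t1).add (InTriSpan.single t2)).of_eq ?_
    have e1 : s(z, x) = s(x, z) := Sym2.eq_swap
    rw [e1]
    calc χ s(x,y) + χ s(y,z) + χ s(x,z) + (χ s(x,z) + χ s(z,w) + χ s(w,x))
        = χ s(w,x) + χ s(x,y) + χ s(y,z) + χ s(z,w) + (χ s(x,z) + χ s(x,z)) := by abel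
      _ = χ s(w,x) + χ s(x,y) + χ s(y,z) + χ s(z,w) := by rw [add_self, add_zero]
  -- apex construction
  set p : V d := fun i => max (max (w i) (x i)) (max (y i) (z i)) - 1 with hp
  have hnear : near p w ∧ near p x ∧ near p y ∧ near p z := by
    refine ⟨fun i => ?_, fun i => ?_, fun i => ?_, fun i => ?_⟩ <;>
    · have b1 : w i ≤ max (max (w i) (x i)) (max (y i) (z i)) :=
        le_trans (le_max_left _ _) (le_max_left _ _)
      have b2 : x i ≤ max (max (w i) (x i)) (max (y i) (z i)) :=
        le_trans (le_max_right _ _) (le_max_left _ _)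
      have b3 : y i ≤ max (max (w i) (x i)) (max (y i) (z i)) :=
        le_trans (le_max_left _ _) (le_max_right _ _)
      have b4 : z i ≤ max (max (w i) (x i)) (max (y i) (z i)) :=
        le_trans (le_max_right _ _) (le_max_right _ _)
      have hc : max (max (w i) (x i)) (max (y i) (z i)) = w i ∨
          max (max (w i) (x i)) (max (y i) (z i)) = x i ∨
          max (max (w i) (x i)) (max (y i) (z i)) = y i ∨
          max (max (w i) (x i)) (max (y i) (z i)) = z i := by
        rcases max_choice (max (w i) (x i)) (max (y i) (z i)) with h | h <;> rw [h]
        · rcases max_choice (w i) (x i) with h' | h' <;> rw [h'] <;> tauto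
        · rcases max_choice (y i) (z i) with h' | h' <;> rw [h'] <;> tauto
      have d1 := hwxn i; have d2 := hxyn i; have d3 := hyzn i; have d4 := hzwn i
      rw [abs_le] at d1 d2 d3 d4
      have hpi : p i = max (max (w i) (x i)) (max (y i) (z i)) - 1 := rfl
      rw [abs_le]
      constructor <;> rcases hc with h | h | h | h <;> omega
  obtain ⟨hpw, hpx, hpy, hpz⟩ := hnear
  have hpnw : p ≠ w := fun h => hwyA (h ▸ hpy)
  have hpny : p ≠ y := fun h => hwyA (near.symm (h ▸ hpw))
  have hpnx : p ≠ x := fun h => hxzA (h ▸ hpz)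
  have hpnz : p ≠ z := fun h => hxzA (near.symm (h ▸ hpx))
  have apw : (latticeGraph d).Adj p w := adj_iff.mpr ⟨hpnw, hpw⟩
  have apx : (latticeGraph d).Adj p x := adj_iff.mpr ⟨hpnx, hpx⟩
  have apy : (latticeGraph d).Adj p y := adj_iff.mpr ⟨hpny, hpy⟩
  have apz : (latticeGraph d).Adj p z := adj_iff.mpr ⟨hpnz, hpz⟩
  have t1 : IsTriClass (χ s(w,x) + χ s(x,p) + χ s(p,w)) := ⟨w, x, p, hwx, apx.symm, apw, rfl⟩
  have t2 : IsTriClass (χ s(x,y) + χ s(y,p) + χ s(p,x)) := ⟨x, y, p, hxy, apy.symm, apx, rfl⟩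
  have t3 : IsTriClass (χ s(y,z) + χ s(z,p) + χ s(p,y)) := ⟨y, z, p, hyz, apz.symm, apy, rfl⟩
  have t4 : IsTriClass (χ s(z,w) + χ s(w,p) + χ s(p,z)) := ⟨z, w, p, hzw, apw.symm, apz, rfl⟩
  refine (((InTriSpan.single t1).add (InTriSpan.single t2)).add
    ((InTriSpan.single t3).add (InTriSpan.single t4))).of_eq ?_
  have e1 : s(x,p) = s(p,x) := Sym2.eq_swap
  have e2 : s(y,p) = s(p,y) := Sym2.eq_swap
  have e3 : s(z,p) = s(p,z) := Sym2.eq_swap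
  have e4 : s(w,p) = s(p,w) := Sym2.eq_swap
  rw [e1, e2, e3, e4]
  calc χ s(w,x) + χ s(p,x) + χ s(p,w) + (χ s(x,y) + χ s(p,y) + χ s(p,x)) +
        (χ s(y,z) + χ s(p,z) + χ s(p,y) + (χ s(z,w) + χ s(p,w) + χ s(p,z)))
      = χ s(w,x) + χ s(x,y) + χ s(y,z) + χ s(z,w) + ((χ s(p,x) + χ s(p,x)) +
        ((χ s(p,y) + χ s(p,y)) + ((χ s(p,z) + χ s(p,z)) + (χ s(p,w) + χ s(p,w))))) := by abel
    _ = χ s(w,x) + χ s(x,y) + χ s(y,z) + χ s(z,w) := by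
        rw [add_self, add_self, add_self, add_self, add_zero, add_zero, add_zero, add_zero]


lemma key_base {b c : V d} (hbc : (latticeGraph d).Adj b c) :
    InTriSpan (χ s(b,c) + (canon b b + canon c b)) := by
  have hcb : c ≠ b := hbc.symm.ne
  have hnear : near c b := near.symm (adj_iff.mp hbc).2
  have hstp : stp c b = b := stp_eq_of_near hnear
  refine InTriSpan.zero.of_eq ?_
  rw [canon_ne hcb, hstp, canon_self, add_zero, zero_add]
  have e1 : s(c, b) = s(b, c) := Sym2.eq_swap
  rw [e1, add_self]

lemma key (b : V d) : ∀ n : ℕ, ∀ a c : V d, D a b ≤ n → (latticeGraph d).Adj a c →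
    InTriSpan (χ s(a,c) + (canon a b + canon c b)) := by
  intro n
  induction n with
  | zero =>
    intro a c hD hac
    have hab : a = b := D_eq_zero (Nat.le_zero.mp hD)
    subst hab
    exact key_base hac
  | succ n ih =>
    intro a c hD hac
    by_cases hab : a = b
    · subst hab; exact key_base hac
    by_cases hcb : c = b
    · subst hcb
      have hkb := key_base hac.symm
      refine hkb.of_eq ?_
      have e1 : s(c, a) = s(a, c) := Sym2.eq_swap
      rw [e1]
      abel
    -- main case
    have hacn := (adj_iff.mp hac).2
    set a' := stp a b with ha'
    set c' := stp c b with hc'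
    have haa' : (latticeGraph d).Adj a a' := adj_stp hab
    have hcc' : (latticeGraph d).Adj c c' := adj_stp hcb
    have hn' : near a' c' := near_stp_stp b hacn
    rw [canon_ne hab, canon_ne hcb, ← ha', ← hc']
    by_cases heq : a' = c'
    · -- single triangle a c a'
      have hca' : (latticeGraph d).Adj c a' := heq ▸ hcc'
      have t1 : IsTriClass (χ s(a,c) + χ s(c,a') + χ s(a',a)) :=
        ⟨a, c, a', hac, hca', haa'.symm, rfl⟩
      refine (InTriSpan.single t1).of_eq ?_
      rw [← heq]
      have e1 : s(a', a) = s(a, a') := Sym2.eq_swap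
      rw [e1]
      calc χ s(a,c) + χ s(c,a') + χ s(a,a')
          = χ s(a,c) + ((χ s(a,a') + canon a' b) + (χ s(c,a') + canon a' b)) -
            (canon a' b + canon a' b) := by abel
        _ = χ s(a,c) + ((χ s(a,a') + canon a' b) + (χ s(c,a') + canon a' b)) := by
            rw [add_self, sub_zero]
    · -- quad + induction
      have ha'c' : (latticeGraph d).Adj a' c' := adj_iff.mpr ⟨heq, hn'⟩
      have hDa' : D a' b ≤ n := by
        have hlt : D a' b < D a b := by rw [ha']; exact D_lt hab
        omega
      have hK := ih a' c' hDa' ha'c'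
      have hQ := quad hac hcc' ha'c'.symm haa'.symm
      refine (hQ.add hK).of_eq ?_
      have e1 : s(c', a') = s(a', c') := Sym2.eq_swap
      have e2 : s(a', a) = s(a, a') := Sym2.eq_swap
      rw [e1, e2]
      calc χ s(a,c) + χ s(c,c') + χ s(a',c') + χ s(a,a') +
            (χ s(a',c') + (canon a' b + canon c' b))
          = χ s(a,c) + ((χ s(a,a') + canon a' b) + (χ s(c,c') + canon c' b)) +
            (χ s(a',c') + χ s(a',c')) := by abel
        _ = χ s(a,c) + ((χ s(a,a') + canon a' b) + (χ s(c,c') + canon c' b)) := by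
            rw [add_self, add_zero]

lemma walk_lemma {a b : V d} (p : (latticeGraph d).Walk a b) :
    InTriSpan ((p.edges.map χ).sum + canon a b) := by
  induction p with
  | nil =>
    simp only [SimpleGraph.Walk.edges_nil, List.map_nil, List.sum_nil, zero_add, canon_self]
    exact InTriSpan.zero
  | @cons u v z h q ih =>
    have hkey := key z (D u z) u v le_rfl h
    refine (ih.add hkey).of_eq ?_
    simp only [SimpleGraph.Walk.edges_cons, List.map_cons, List.sum_cons]
    calc (q.edges.map χ).sum + canon v z + (χ s(u,v) + (canon u z + canon v z))
        = χ s(u,v) + (q.edges.map χ).sum + canon u z + (canon v z + canon v z) := by abel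
      _ = χ s(u,v) + (q.edges.map χ).sum + canon u z := by rw [add_self, add_zero]


lemma edge_ne_of_tri {p q r : V d} (hpq : (latticeGraph d).Adj p q)
    (hqr : (latticeGraph d).Adj q r) (hrp : (latticeGraph d).Adj r p) :
    s(p,q) ≠ s(q,r) ∧ s(p,q) ≠ s(r,p) ∧ s(q,r) ≠ s(r,p) := by
  refine ⟨fun h => ?_, fun h => ?_, fun h => ?_⟩ <;> rw [Sym2.eq_iff] at h
  · rcases h with ⟨h1, h2⟩ | ⟨h1, h2⟩
    · exact hpq.ne h1
    · exact hrp.ne h1.symm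
  · rcases h with ⟨h1, h2⟩ | ⟨h1, h2⟩
    · exact hrp.ne h1.symm
    · exact hqr.ne h2
  · rcases h with ⟨h1, h2⟩ | ⟨h1, h2⟩
    · exact hqr.ne h1
    · exact hpq.ne h1.symm

lemma tri_walk {p q r : V d} (hpq : (latticeGraph d).Adj p q)
    (hqr : (latticeGraph d).Adj q r) (hrp : (latticeGraph d).Adj r p) :
    ∃ t : (latticeGraph d).Walk p p, t.IsCycle ∧ t.length = 3 ∧
      t.edges.toFinset = {s(p,q), s(q,r), s(r,p)} := by
  obtain ⟨he12, he13, he23⟩ := edge_ne_of_tri hpq hqr hrp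
  have hqp : q ≠ p := hpq.ne.symm
  have hqr' : q ≠ r := hqr.ne
  have hrp' : r ≠ p := hrp.ne
  refine ⟨SimpleGraph.Walk.cons hpq (SimpleGraph.Walk.cons hqr
    (SimpleGraph.Walk.cons hrp SimpleGraph.Walk.nil)), ?_, by simp, by simp⟩
  rw [SimpleGraph.Walk.isCycle_def, SimpleGraph.Walk.isTrail_def]
  refine ⟨?_, by simp, ?_⟩
  · simp [he12, he13, he23]
  · simp [hqp, hqr', hrp']

lemma tri_eval {p q r : V d} (hpq : (latticeGraph d).Adj p q)
    (hqr : (latticeGraph d).Adj q r) (hrp : (latticeGraph d).Adj r p) (e : Sym2 (V d)) :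
    (χ s(p,q) + χ s(q,r) + χ s(r,p)) e
      = if e ∈ ({s(p,q), s(q,r), s(r,p)} : Finset (Sym2 (V d))) then 1 else 0 := by
  obtain ⟨he12, he13, he23⟩ := edge_ne_of_tri hpq hqr hrp
  simp only [Pi.add_apply, χ, Finset.mem_insert, Finset.mem_singleton]
  by_cases h1 : e = s(p,q)
  · by_cases h2 : e = s(q,r)
    · exact absurd (h1.symm.trans h2) he12
    · by_cases h3 : e = s(r,p)
      · exact absurd (h1.symm.trans h3) he13
      · simp [h1, h2, h3, hpq.ne, hqr.ne, hrp.ne, hpq.ne.symm, hqr.ne.symm, hrp.ne.symm]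
  · by_cases h2 : e = s(q,r)
    · by_cases h3 : e = s(r,p)
      · exact absurd (h2.symm.trans h3) he23
      · simp [h1, h2, h3, hpq.ne, hqr.ne, hrp.ne, hpq.ne.symm, hqr.ne.symm, hrp.ne.symm]
    · by_cases h3 : e = s(r,p) <;>
        simp [h1, h2, h3, hpq.ne, hqr.ne, hrp.ne, hpq.ne.symm, hqr.ne.symm, hrp.ne.symm]

lemma zmod2_eq_one_iff_odd (n : ℕ) : (n : ZMod 2) = 1 ↔ Odd n := by
  induction n with
  | zero => simp [Nat.odd_iff]
  | succ n ih =>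
    have hx : ∀ x : ZMod 2, x + 1 = 1 ↔ ¬(x = 1) := by decide
    rw [Nat.cast_succ, hx, ih, Nat.odd_add_one]

lemma count_eval (l : List (Sym2 (V d))) (e : Sym2 (V d)) :
    ((l.map χ).sum) e = (l.count e : ZMod 2) := by
  induction l with
  | nil => simp
  | cons f l ih =>
    simp only [List.map_cons, List.sum_cons, Pi.add_apply, ih, List.count_cons]
    by_cases h : e = f
    · subst h; simp [χ]; ring
    · have h' : ¬(f = e) := fun hh => h hh.symm
      simp [χ, h, h']

lemma list_sum_eval (L : List (F d)) (e : Sym2 (V d)) :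
    L.sum e = ∑ j : Fin L.length, (L.get j) e := by
  induction L with
  | nil => simp
  | cons t L ih =>
    simp only [List.sum_cons, Pi.add_apply, ih, List.length_cons, Fin.sum_univ_succ,
      List.get]
    rfl

end LatticeTri

/-- **Triangles generate the cycle space of the `ℤᵈ` sup-norm graph.** For `d ≥ 2`, every
cycle of the graph on `ℤᵈ` (edges given by `‖x − y‖_∞ = 1`) is the mod-2 edgewise sum of
finitely many 3-cycles: there are finitely many 3-cycle edge sets such that an edge lies
on the given cycle iff it lies in an odd number of them. -/
theorem lattice_triangles_generate_cycle_space (d : ℕ) (hd : 2 ≤ d)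
    (x : Fin d → ℤ) (w : (latticeGraph d).Walk x x) (hw : w.IsCycle) :
    ∃ (m : ℕ) (T : Fin m → Finset (Sym2 (Fin d → ℤ))),
      (∀ j : Fin m, ∃ (y : Fin d → ℤ) (t : (latticeGraph d).Walk y y),
        t.IsCycle ∧ t.length = 3 ∧ T j = t.edges.toFinset) ∧
      (∀ e : Sym2 (Fin d → ℤ),
        e ∈ w.edges ↔ Odd (Finset.univ.filter (fun j : Fin m => e ∈ T j)).card) := by
  classical
  open LatticeTri in
  have hspan := LatticeTri.walk_lemma w
  rw [LatticeTri.canon_self, add_zero] at hspan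
  obtain ⟨L, hL, hsum⟩ := hspan
  have hj : ∀ j : Fin L.length, LatticeTri.IsTriClass (L.get j) := fun j =>
    hL _ (L.get_mem _)
  choose P Q R hPQ hQR hRP hEQ using hj
  refine ⟨L.length, fun j => {s(P j, Q j), s(Q j, R j), s(R j, P j)}, ?_, ?_⟩
  · intro j
    obtain ⟨t, hc, hl, he⟩ := LatticeTri.tri_walk (hPQ j) (hQR j) (hRP j)
    exact ⟨P j, t, hc, hl, he.symm⟩
  · intro e
    have hnd : w.edges.Nodup := hw.1.1.edges_nodup
    have hcount : ((w.edges.count e : ℕ) : ZMod 2)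
        = ((Finset.univ.filter
            (fun j : Fin L.length => e ∈ ({s(P j, Q j), s(Q j, R j), s(R j, P j)} :
              Finset (Sym2 (Fin d → ℤ))))).card : ZMod 2) := by
      rw [← LatticeTri.count_eval, hsum, LatticeTri.list_sum_eval, ← Finset.sum_boole]
      refine Finset.sum_congr rfl fun j _ => ?_
      rw [hEQ j]
      exact LatticeTri.tri_eval (hPQ j) (hQR j) (hRP j) e
    constructor
    · intro he
      have h1 : w.edges.count e = 1 := List.count_eq_one_of_mem hnd he
      rw [← LatticeTri.zmod2_eq_one_iff_odd, ← hcount, h1]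
      norm_num
    · intro ho
      by_contra hne
      have h0 : w.edges.count e = 0 := List.count_eq_zero_of_not_mem hne
      rw [← LatticeTri.zmod2_eq_one_iff_odd, ← hcount, h0] at ho
      simp at ho
end

section
/- Let u ∈ (𝕋^k)^d be such that the action a_u of ℤ^d on 𝕋^k is free, and let G_{a_u} be the associated graph. Then for every r > 0 there is a Borel maximal r-discrete subset of 𝕋^k for G_{a_u}. -/
open Finset

/-- The `k`-dimensional torus `𝕋ᵏ = ℝᵏ/ℤᵏ`. -/
abbrev Torus (k : ℕ) := Fin k → AddCircle (1 : ℝ)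

/-- The action `a_u` of `ℤᵈ` on `𝕋ᵏ`: `(n_1, …, n_d) · x = n_1 u_1 + ⋯ + n_d u_d + x`. -/
noncomputable def torusAct {k d : ℕ} (u : Fin d → Torus k) (g : Fin d → ℤ) (x : Torus k) : Torus k :=
  (∑ i, g i • u i) + x

/-- The graph `G_{a_u}` on `𝕋ᵏ`: `x` and `y` are adjacent iff `γ ·_{a_u} x = y` for some
`γ` with `‖γ‖_∞ = 1`. -/
def torusGraph {k d : ℕ} (u : Fin d → Torus k) : SimpleGraph (Torus k) :=
  SimpleGraph.fromRel (fun x y => ∃ γ ∈ Gamma1 d, torusAct u γ x = y)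

noncomputable def vmap {k d : ℕ} (u : Fin d → Torus k) (g : Fin d → ℤ) : Torus k :=
  ∑ i, g i • u i

lemma torusAct_eq {k d : ℕ} (u : Fin d → Torus k) (g : Fin d → ℤ) (x : Torus k) :
    torusAct u g x = vmap u g + x := rfl

lemma vmap_add {k d : ℕ} (u : Fin d → Torus k) (g h : Fin d → ℤ) :
    vmap u (g + h) = vmap u g + vmap u h := by
  simp [vmap, add_zsmul, Finset.sum_add_distrib]

@[simp] lemma vmap_zero {k d : ℕ} (u : Fin d → Torus k) : vmap u 0 = 0 := by
  simp [vmap]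

lemma vmap_neg {k d : ℕ} (u : Fin d → Torus k) (g : Fin d → ℤ) :
    vmap u (-g) = - vmap u g := by
  simp [vmap, neg_zsmul]

lemma mem_Gamma1 {d : ℕ} {γ : Fin d → ℤ} :
    γ ∈ Gamma1 d ↔ γ ≠ 0 ∧ ∀ i, |γ i| ≤ 1 := by
  simp only [Gamma1, Finset.mem_erase, Fintype.mem_piFinset, Finset.mem_insert,
    Finset.mem_singleton]
  constructor
  · rintro ⟨h0, h⟩; exact ⟨h0, fun i => by have := h i; rw [abs_le]; omega⟩
  · rintro ⟨h0, h⟩; exact ⟨h0, fun i => by have := h i; rw [abs_le] at this; omega⟩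

lemma Gamma1_neg {d : ℕ} {γ : Fin d → ℤ} (h : γ ∈ Gamma1 d) : -γ ∈ Gamma1 d := by
  rw [mem_Gamma1] at h ⊢
  exact ⟨neg_ne_zero.mpr h.1, fun i => by have := h.2 i; simp only [Pi.neg_apply, abs_neg]; omega⟩

lemma adj_iff {k d : ℕ} {u : Fin d → Torus k} {x y : Torus k} (h : (torusGraph u).Adj x y) :
    ∃ γ ∈ Gamma1 d, y = vmap u γ + x := by
  rw [torusGraph, SimpleGraph.fromRel_adj] at h
  obtain ⟨-, h | h⟩ := h
  · obtain ⟨γ, hγ, hxy⟩ := h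
    exact ⟨γ, hγ, by rw [← hxy, torusAct_eq]⟩
  · obtain ⟨γ, hγ, hxy⟩ := h
    refine ⟨-γ, Gamma1_neg hγ, ?_⟩
    rw [torusAct_eq] at hxy
    rw [vmap_neg, ← hxy]; abel

lemma walk_to_g {k d : ℕ} {u : Fin d → Torus k} :
    ∀ {x y : Torus k} (w : (torusGraph u).Walk x y),
      ∃ g : Fin d → ℤ, (∀ i, |g i| ≤ (w.length : ℤ)) ∧ y = vmap u g + x := by
  intro x y w
  induction w with
  | nil => exact ⟨0, fun i => by simp, by simp⟩
  | cons h p ih =>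
    obtain ⟨γ, hγ, hz⟩ := adj_iff h
    obtain ⟨g, hg, hy⟩ := ih
    refine ⟨g + γ, fun i => ?_, ?_⟩
    · have h1 := (mem_Gamma1.mp hγ).2 i
      have h2 := hg i
      simp only [SimpleGraph.Walk.length_cons, Pi.add_apply]
      rw [abs_le] at h1 h2 ⊢
      push_cast
      omega
    · rw [hy, hz, vmap_add]; abel

lemma edist_to_g {k d : ℕ} {u : Fin d → Torus k} {x y : Torus k} {n : ℕ}
    (h : (torusGraph u).edist x y ≤ (n : ℕ∞)) :
    ∃ g : Fin d → ℤ, (∀ i, |g i| ≤ (n : ℤ)) ∧ y = vmap u g + x := by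
  have hne : (torusGraph u).edist x y ≠ ⊤ :=
    fun ht => by simp [ht] at h
  obtain ⟨p, hp⟩ := SimpleGraph.exists_walk_of_edist_ne_top hne
  obtain ⟨g, hg, hy⟩ := walk_to_g p
  have hlen : (p.length : ℕ∞) ≤ (n : ℕ∞) := hp ▸ h
  have hlen' : p.length ≤ n := by exact_mod_cast hlen
  exact ⟨g, fun i => le_trans (hg i) (by exact_mod_cast hlen'), hy⟩

lemma g_to_edist {k d : ℕ} {u : Fin d → Torus k}
    (hfree : ∀ (g : Fin d → ℤ) (x : Torus k), torusAct u g x = x → g = 0) :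
    ∀ (n : ℕ) (g : Fin d → ℤ), (∀ i, |g i| ≤ (n : ℤ)) → ∀ x : Torus k,
      (torusGraph u).edist x (vmap u g + x) ≤ (n : ℕ∞) := by
  intro n
  induction n with
  | zero =>
    intro g hg x
    have : g = 0 := by funext i; have := hg i; rw [abs_le] at this; simp only [Pi.zero_apply]; omega
    subst this
    simp [SimpleGraph.edist_self]
  | succ n ih =>
    intro g hg x
    by_cases hg0 : g = 0
    · subst hg0; simp [SimpleGraph.edist_self]
    · set γ : Fin d → ℤ := fun i => if 0 < g i then 1 else if g i < 0 then -1 else 0 with hγdef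
      set g' : Fin d → ℤ := g - γ with hg'def
      have hsum : γ + g' = g := by funext i; simp [hg'def]
      have hg' : ∀ i, |g' i| ≤ (n : ℤ) := by
        intro i
        have := hg i
        rw [abs_le] at this ⊢
        simp only [hg'def, Pi.sub_apply, hγdef]
        split_ifs <;> push_cast at * <;> omega
      have hγmem : γ ∈ Gamma1 d := by
        rw [mem_Gamma1]
        constructor
        · intro h0
          apply hg0
          funext i
          have : γ i = 0 := by rw [h0]; rfl
          simp only [hγdef] at this
          split_ifs at this <;> simp only [Pi.zero_apply] <;> omega
        · intro i
          simp only [hγdef]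
          split_ifs <;> norm_num
      have key : torusAct u γ (vmap u g' + x) = vmap u g + x := by
        rw [torusAct_eq, ← add_assoc, ← vmap_add, hsum]
      have hne : vmap u g' + x ≠ vmap u g + x := by
        intro h
        have : torusAct u γ (vmap u g' + x) = vmap u g' + x := by rw [key, h]
        exact (mem_Gamma1.mp hγmem).1 (hfree γ _ this)
      have hadj : (torusGraph u).Adj (vmap u g' + x) (vmap u g + x) := by
        rw [torusGraph, SimpleGraph.fromRel_adj]
        exact ⟨hne, Or.inl ⟨γ, hγmem, key⟩⟩
      calc (torusGraph u).edist x (vmap u g + x)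
          ≤ (torusGraph u).edist x (vmap u g' + x)
            + (torusGraph u).edist (vmap u g' + x) (vmap u g + x) :=
            SimpleGraph.edist_triangle
        _ ≤ (n : ℕ∞) + 1 := by
            gcongr
            · exact ih g' hg' x
            · exact le_of_eq (SimpleGraph.edist_eq_one_iff_adj.mpr hadj)
        _ = ((n + 1 : ℕ) : ℕ∞) := by push_cast; ring

instance fact_zero_lt_one_real : Fact ((0:ℝ) < 1) := ⟨one_pos⟩

noncomputable def rep1 (z : AddCircle (1:ℝ)) : ℝ := (AddCircle.equivIoc 1 0 z : ℝ)

lemma rep1_mem (z : AddCircle (1:ℝ)) : rep1 z ∈ Set.Ioc (0:ℝ) 1 := by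
  have := (AddCircle.equivIoc 1 0 z).2; simpa [rep1] using this

lemma coe_rep1 (z : AddCircle (1:ℝ)) : ((rep1 z : ℝ) : AddCircle (1:ℝ)) = z :=
  (AddCircle.equivIoc 1 0).symm_apply_apply z

lemma measurable_rep1 : Measurable rep1 :=
  measurable_subtype_coe.comp (AddCircle.measurableEquivIoc 1 0).measurable

lemma norm_mk_le (a : ℝ) : ‖(↑a : AddCircle (1:ℝ))‖ ≤ |a| := by
  rw [AddCircle.norm_eq]; simpa using round_le a 0

def piece (k N : ℕ) (c : Fin k → Fin N) : Set (Torus k) :=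
  {x | ∀ i, rep1 (x i) ∈ Set.Ioc ((c i : ℝ) / N) (((c i : ℝ) + 1) / N)}

lemma measurable_piece (k N : ℕ) (c : Fin k → Fin N) : MeasurableSet (piece k N c) := by
  have : piece k N c
      = ⋂ i, (fun x : Torus k => rep1 (x i)) ⁻¹' Set.Ioc ((c i : ℝ) / N) (((c i : ℝ) + 1) / N) := by
    ext x; simp [piece]
  rw [this]
  exact MeasurableSet.iInter fun i =>
    (measurable_rep1.comp (measurable_pi_apply i)) measurableSet_Ioc

lemma exists_fin_interval (N : ℕ) (hN : 0 < N) (t : ℝ) (ht : t ∈ Set.Ioc (0:ℝ) 1) :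
    ∃ j : Fin N, t ∈ Set.Ioc ((j : ℝ) / N) (((j : ℝ) + 1) / N) := by
  obtain ⟨ht0, ht1⟩ := ht
  have hNR : (0:ℝ) < N := by exact_mod_cast hN
  set m : ℤ := ⌈t * N⌉ with hm
  have hm1 : 1 ≤ m := Int.ceil_pos.mpr (by positivity)
  have hmN : m ≤ N := Int.ceil_le.mpr (by push_cast; nlinarith)
  refine ⟨⟨m.toNat - 1, by omega⟩, ?_, ?_⟩
  · have h1 : ((m.toNat - 1 : ℕ) : ℤ) = m - 1 := by omega
    have hj : ((m.toNat - 1 : ℕ) : ℝ) = (m : ℝ) - 1 := by exact_mod_cast h1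
    simp only [hj]
    rw [div_lt_iff₀ hNR]
    have := Int.ceil_lt_add_one (t * N)
    rw [← hm] at this
    linarith
  · have h1 : ((m.toNat - 1 : ℕ) : ℤ) = m - 1 := by omega
    have hj : ((m.toNat - 1 : ℕ) : ℝ) = (m : ℝ) - 1 := by exact_mod_cast h1
    simp only [hj]
    rw [le_div_iff₀ hNR]
    have := Int.le_ceil (t * N)
    rw [← hm] at this
    linarith

lemma exists_piece (k N : ℕ) (hN : 0 < N) (x : Torus k) : ∃ c, x ∈ piece k N c := by
  have h : ∀ i : Fin k, ∃ j : Fin N,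
      rep1 (x i) ∈ Set.Ioc ((j : ℝ) / N) (((j : ℝ) + 1) / N) :=
    fun i => exists_fin_interval N hN _ (rep1_mem (x i))
  exact ⟨fun i => (h i).choose, fun i => (h i).choose_spec⟩

lemma piece_norm_le (k N : ℕ) (hN : 0 < N) (c : Fin k → Fin N) {x y : Torus k}
    (hx : x ∈ piece k N c) (hy : y ∈ piece k N c) : ‖x - y‖ ≤ 1 / N := by
  have hNR : (0:ℝ) < N := by exact_mod_cast hN
  rw [pi_norm_le_iff_of_nonneg (by positivity)]
  intro i
  obtain ⟨hx1, hx2⟩ := hx i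
  obtain ⟨hy1, hy2⟩ := hy i
  have hd : ((c i : ℝ) + 1) / N - (c i : ℝ) / N = 1 / N := by field_simp; ring
  have habs : |rep1 (x i) - rep1 (y i)| ≤ 1 / N := by
    rw [abs_le]; constructor <;> linarith
  calc ‖(x - y) i‖ = ‖(↑(rep1 (x i) - rep1 (y i)) : AddCircle (1:ℝ))‖ := by
        rw [AddCircle.coe_sub, coe_rep1, coe_rep1]
        rfl
    _ ≤ |rep1 (x i) - rep1 (y i)| := norm_mk_le _
    _ ≤ 1 / N := habs

def chain {α : Type*} [Sub α] (P : ℕ → Set α) (F : Finset α) : ℕ → Set α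
  | 0 => ∅
  | n + 1 => chain P F n ∪ {x | x ∈ P n ∧ ∀ f ∈ F, x - f ∉ chain P F n}

lemma chain_mono {α : Type*} [Sub α] (P : ℕ → Set α) (F : Finset α) :
    ∀ {m n : ℕ}, m ≤ n → chain P F m ⊆ chain P F n := by
  intro m n h
  induction n with
  | zero => rw [Nat.le_zero.mp h]
  | succ n ih =>
    rcases Nat.lt_or_ge m (n+1) with h' | h'
    · exact (ih (Nat.lt_succ_iff.mp h')).trans Set.subset_union_left
    · rw [le_antisymm h h']

lemma chain_measurable {k : ℕ} (P : ℕ → Set (Torus k)) (F : Finset (Torus k))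
    (hP : ∀ n, MeasurableSet (P n)) : ∀ n, MeasurableSet (chain P F n) := by
  intro n
  induction n with
  | zero => exact MeasurableSet.empty
  | succ n ih =>
    refine MeasurableSet.union ih ?_
    have : {x | x ∈ P n ∧ ∀ f ∈ F, x - f ∉ chain P F n}
        = P n ∩ ⋂ f ∈ F, (fun x : Torus k => x - f) ⁻¹' (chain P F n)ᶜ := by
      ext x; simp
    rw [this]
    exact (hP n).inter <| MeasurableSet.biInter F.countable_toSet fun f _ =>
      ((continuous_id.sub continuous_const).measurable) ih.compl


/-- **Borel maximal discrete sets for `G_{a_u}`.** If `u ∈ (𝕋ᵏ)ᵈ` induces a free action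
`a_u` of `ℤᵈ` on `𝕋ᵏ`, then for every `r > 0` there is a Borel maximal `r`-discrete set
for the graph `G_{a_u}`: a Borel set `Y` with `d_G(x,y) > r` for distinct `x, y ∈ Y`,
such that every point is within graph distance `r` of a point of `Y`. -/
theorem borel_maximal_discrete_set (k d : ℕ) (u : Fin d → Torus k)
    (hfree : ∀ (g : Fin d → ℤ) (x : Torus k), torusAct u g x = x → g = 0)
    (r : ℕ) (hr : 0 < r) :
    ∃ Y : Set (Torus k), MeasurableSet Y ∧
      (∀ x ∈ Y, ∀ y ∈ Y, x ≠ y → (r : ℕ∞) < (torusGraph u).edist x y) ∧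
      (∀ x : Torus k, ∃ y ∈ Y, (torusGraph u).edist x y ≤ (r : ℕ∞)) := by
  classical
  -- the finite set `B` of group elements of norm `≤ r`, and the jump set `F`
  set B : Finset (Fin d → ℤ) := Fintype.piFinset fun _ : Fin d => Finset.Icc (-(r:ℤ)) (r:ℤ)
    with hBdef
  have hBmem : ∀ g : Fin d → ℤ, g ∈ B ↔ ∀ i, |g i| ≤ (r : ℤ) := by
    intro g
    simp [hBdef, Fintype.mem_piFinset, Finset.mem_Icc, abs_le, and_comm]
  have h0B : (0 : Fin d → ℤ) ∈ B := by
    rw [hBmem]; intro i; simp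
  have hBneg : ∀ g ∈ B, -g ∈ B := by
    intro g hg
    rw [hBmem] at hg ⊢
    intro i
    simpa using hg i
  set F : Finset (Torus k) := B.image (vmap u) with hFdef
  have h0F : (0 : Torus k) ∈ F :=
    Finset.mem_image.mpr ⟨0, h0B, vmap_zero u⟩
  have hFneg : ∀ f ∈ F, -f ∈ F := by
    intro f hf
    obtain ⟨g, hg, rfl⟩ := Finset.mem_image.mp hf
    exact Finset.mem_image.mpr ⟨-g, hBneg g hg, vmap_neg u g⟩
  -- nonzero `g ∈ B` give jumps with norm bounded below by `ε > 0`
  have hvne : ∀ g : Fin d → ℤ, g ≠ 0 → vmap u g ≠ 0 := by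
    intro g hg hv
    exact hg (hfree g 0 (by rw [torusAct_eq, hv, add_zero]))
  set S : Finset ℝ := insert (1:ℝ) ((B.erase 0).image fun g => ‖vmap u g‖) with hSdef
  have hSne : S.Nonempty := Finset.insert_nonempty _ _
  set ε : ℝ := S.min' hSne with hεdef
  have hε0 : 0 < ε := by
    have hmem := S.min'_mem hSne
    rcases Finset.mem_insert.mp hmem with h | h
    · show (0:ℝ) < S.min' hSne
      rw [h]; norm_num
    · obtain ⟨g, hg, hval⟩ := Finset.mem_image.mp h
      show (0:ℝ) < S.min' hSne
      rw [← hval]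
      exact norm_pos_iff.mpr (hvne g (Finset.ne_of_mem_erase hg))
  have hεle : ∀ g ∈ B, g ≠ 0 → ε ≤ ‖vmap u g‖ := by
    intro g hg hg0
    exact S.min'_le _ (Finset.mem_insert_of_mem
      (Finset.mem_image.mpr ⟨g, Finset.mem_erase.mpr ⟨hg0, hg⟩, rfl⟩))
  -- choose `N` with `1/N < ε`
  obtain ⟨n0, hn0⟩ := exists_nat_one_div_lt hε0
  set N : ℕ := n0 + 1 with hNdef
  have hNpos : 0 < N := Nat.succ_pos n0
  have hN : (1:ℝ) / N < ε := by
    show (1:ℝ) / (↑(n0 + 1) : ℕ) < ε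
    push_cast
    exact hn0
  -- the finite partition into small pieces, enumerated
  set M : ℕ := Fintype.card (Fin k → Fin N) with hMdef
  set e : (Fin k → Fin N) ≃ Fin M := Fintype.equivFin (Fin k → Fin N) with hedef
  set P : ℕ → Set (Torus k) :=
    fun n => if h : n < M then piece k N (e.symm ⟨n, h⟩) else ∅ with hPdef
  have hPmeas : ∀ n, MeasurableSet (P n) := by
    intro n
    by_cases h : n < M
    · simp only [hPdef, dif_pos h]
      exact measurable_piece k N _
    · simp only [hPdef, dif_neg h]
      exact MeasurableSet.empty
  -- the greedy construction
  set Y : Set (Torus k) := chain P F M with hYdef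
  have hYmeas : MeasurableSet Y := chain_measurable P F hPmeas M
  -- separation invariant
  have hsep : ∀ n, ∀ x ∈ chain P F n, ∀ y ∈ chain P F n, x ≠ y → x - y ∉ F := by
    intro n
    induction n with
    | zero => intro x hx; exact absurd hx (Set.notMem_empty x)
    | succ n ih =>
      intro x hx y hy hne hF
      rcases hx with hx | hx <;> rcases hy with hy | hy
      · exact ih x hx y hy hne hF
      · -- x old, y new
        have hyx : y - x ∈ F := by
          have := hFneg _ hF
          simpa using this
        exact hy.2 (y - x) hyx (by simpa [sub_sub_cancel] using hx)
      · -- x new, y old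
        exact hx.2 (x - y) hF (by simpa [sub_sub_cancel] using hy)
      · -- both new, in the same small piece
        by_cases hnM : n < M
        · have hx1 : x ∈ piece k N (e.symm ⟨n, hnM⟩) := by
            have := hx.1; simpa only [hPdef, dif_pos hnM] using this
          have hy1 : y ∈ piece k N (e.symm ⟨n, hnM⟩) := by
            have := hy.1; simpa only [hPdef, dif_pos hnM] using this
          obtain ⟨g, hgB, hgv⟩ := Finset.mem_image.mp hF
          have hg0 : g ≠ 0 := by
            intro h; subst h
            rw [vmap_zero] at hgv
            exact hne (sub_eq_zero.mp hgv.symm)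
          have h1 : ε ≤ ‖x - y‖ := hgv ▸ hεle g hgB hg0
          have h2 : ‖x - y‖ ≤ 1 / N := piece_norm_le k N hNpos _ hx1 hy1
          linarith
        · have := hx.1
          simp only [hPdef, dif_neg hnM] at this
          exact absurd this (Set.notMem_empty x)
  -- coverage invariant
  have hcov : ∀ n, ∀ x ∈ P n, ∃ y ∈ chain P F (n + 1), x - y ∈ F := by
    intro n x hx
    by_cases hc : ∀ f ∈ F, x - f ∉ chain P F n
    · exact ⟨x, Or.inr ⟨hx, hc⟩, by simpa using h0F⟩
    · push_neg at hc
      obtain ⟨f, hf, hmem⟩ := hc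
      exact ⟨x - f, Or.inl hmem, by simpa [sub_sub_cancel] using hf⟩
  refine ⟨Y, hYmeas, ?_, ?_⟩
  · -- r-discreteness
    intro x hx y hy hne
    by_contra hle
    push_neg at hle
    obtain ⟨g, hg, hy'⟩ := edist_to_g hle
    have hgB : g ∈ B := (hBmem g).mpr hg
    have : y - x ∈ F := by
      refine Finset.mem_image.mpr ⟨g, hgB, ?_⟩
      rw [hy']; abel
    exact hsep M y hy x hx hne.symm this
  · -- coverage
    intro x
    obtain ⟨c, hc⟩ := exists_piece k N hNpos x
    have hnM : ((e c : ℕ)) < M := (e c).isLt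
    have hPn : x ∈ P (e c : ℕ) := by
      simp only [hPdef, dif_pos hnM]
      have h2 : e.symm ⟨(e c : ℕ), hnM⟩ = c := by simp [Fin.eta]
      rw [h2]
      exact hc
    obtain ⟨y, hy, hxy⟩ := hcov _ x hPn
    have hyY : y ∈ Y := chain_mono P F (by omega : (e c : ℕ) + 1 ≤ M) hy
    obtain ⟨g, hgB, hgv⟩ := Finset.mem_image.mp hxy
    have hx' : x = vmap u g + y := by rw [hgv]; abel
    have := g_to_edist hfree r g (fun i => (hBmem g).mp hgB i) y
    rw [← hx'] at this
    rw [SimpleGraph.edist_comm] at this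
    exact ⟨y, hyY, this⟩
end
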